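/- arXiv:2108.07715 — 6 statements merged into one kernel-verified Lean document; each statement's English description precedes it below -/
import Mathlib

section
/- Suppose (x_i, v_i)_{i=1}^N follows the sticky particle Cucker–Smale dynamics associated to masses (m_i)_{i=1}^N and protocol φ. Define ψ_i(t) = v_i(t) + Σ_{j=1}^N m_j Φ(x_i(t) − x_j(t)), where Φ(x) = ∫_0^x φ(y)dy. Then each ψ_i is constant on every connected component of [0,∞) \ C; in particular, at every t ∉ C, ψ_i is differentiable with (d/dt)ψ_i(t) = 0. -/
open MeasureTheory Set Filter
open scoped Classical

/-- `Φ(x) = ∫_0^x φ(y) dy`, the odd antiderivative of the communication protocol. -/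
noncomputable def Phi (φ : ℝ → ℝ) (x : ℝ) : ℝ := ∫ y in (0:ℝ)..x, φ y

/-- The sticky particle Cucker–Smale dynamics with `N` particles, masses `m`,
communication protocol `φ`, collision-time set `C`, positions `x` and velocities `v`. -/
structure StickyCS (N : ℕ) (m : Fin N → ℝ) (φ : ℝ → ℝ) (C : Set ℝ)
    (x v : Fin N → ℝ → ℝ) : Prop where
  m_pos : ∀ i, 0 < m i
  m_sum : ∑ i, m i = 1
  φ_nonneg : ∀ z, 0 ≤ φ z
  φ_even : ∀ z, φ (-z) = φ z
  φ_locint : ∀ a b : ℝ, IntervalIntegrable φ volume a b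
  φ_anti : AntitoneOn φ (Ioi 0)
  φ_cont : ContinuousOn φ {(0:ℝ)}ᶜ
  C_fin : C.Finite
  C_pos : C ⊆ Ioi 0
  x_cont : ∀ i, ContinuousOn (x i) (Ici 0)
  x_ord : ∀ i j : Fin N, i ≤ j → ∀ t ∈ Ici (0:ℝ), x i t ≤ x j t
  v_rc : ∀ i, ∀ t ∈ Ici (0:ℝ), ContinuousWithinAt (v i) (Ici t) t
  x_deriv : ∀ i, ∀ t ∈ Ici (0:ℝ) \ C, HasDerivWithinAt (x i) (v i t) (Ici 0) t
  v_deriv : ∀ i, ∀ t ∈ Ici (0:ℝ) \ C, HasDerivWithinAt (v i)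
      (∑ j ∈ Finset.univ.filter (fun j => x j t ≠ x i t),
        m j * φ (x j t - x i t) * (v j t - v i t)) (Ici 0) t
  sticky : ∀ i j : Fin N, ∀ s t : ℝ, 0 ≤ s → s ≤ t → x i s = x j s → x i t = x j t
  collide : ∀ τ ∈ C, ∀ i : Fin N,
      v i τ = (∑ j ∈ Finset.univ.filter (fun j => x j τ = x i τ),
                m j * Function.leftLim (v j) τ)
              / (∑ j ∈ Finset.univ.filter (fun j => x j τ = x i τ), m j)

/-- The quantity `ψ_i(t) = v_i(t) + Σ_j m_j Φ(x_i(t) − x_j(t))` is constant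
on every connected component of `[0,∞) \ C`: it has zero derivative at every non-collision
time, and it takes equal values at any two times of `[0,∞)` whose closed interval between
them avoids the collision set `C`. -/
theorem sticky_CS_psi_constant {N : ℕ} (m : Fin N → ℝ) (φ : ℝ → ℝ)
    (C : Set ℝ) (x v : Fin N → ℝ → ℝ) (h : StickyCS N m φ C x v)
    (ψ : Fin N → ℝ → ℝ)
    (hψ : ∀ i t, ψ i t = v i t + ∑ j, m j * Phi φ (x i t - x j t)) :
    (∀ i : Fin N, ∀ t ∈ Ici (0:ℝ) \ C, HasDerivWithinAt (ψ i) 0 (Ici 0) t) ∧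
    (∀ i : Fin N, ∀ s t : ℝ, 0 ≤ s → s ≤ t → Icc s t ∩ C = ∅ → ψ i s = ψ i t) := by
  -- Continuity of Phi
  have hPhiCont : Continuous (Phi φ) := intervalIntegral.continuous_primitive h.φ_locint 0
  -- Step 1: right derivative of ψ i is 0 at every t ∈ Ici 0 \ C
  have key : ∀ i : Fin N, ∀ t ∈ Ici (0:ℝ) \ C, HasDerivWithinAt (ψ i) 0 (Ici t) t := by
    intro i t ht
    obtain ⟨ht0, htC⟩ := ht
    have hsub : Ici t ⊆ Ici (0:ℝ) := Ici_subset_Ici.mpr ht0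
    set D : Fin N → ℝ := fun j =>
      if x j t = x i t then 0 else m j * (φ (x i t - x j t) * (v i t - v j t)) with hD
    have hg : ∀ j : Fin N,
        HasDerivWithinAt (fun s => m j * Phi φ (x i s - x j s)) (D j) (Ici t) t := by
      intro j
      by_cases hx : x j t = x i t
      · have heq : ∀ s ∈ Ici t, m j * Phi φ (x i s - x j s) = 0 := by
          intro s hs
          have hxs : x i s = x j s := h.sticky i j t s ht0 hs hx.symm
          simp [Phi, hxs]
        have : HasDerivWithinAt (fun _ : ℝ => (0:ℝ)) 0 (Ici t) t := hasDerivWithinAt_const t _ 0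
        simpa [hD, hx] using this.congr heq (heq t self_mem_Ici)
      · have ha : x i t - x j t ≠ 0 := sub_ne_zero.mpr fun e => hx e.symm
        have hmem : x i t - x j t ∈ ({(0:ℝ)}ᶜ : Set ℝ) := ha
        have hΦ : HasDerivAt (Phi φ) (φ (x i t - x j t)) (x i t - x j t) := by
          refine intervalIntegral.integral_hasDerivAt_right (h.φ_locint 0 _) ?_ ?_
          · exact h.φ_cont.stronglyMeasurableAtFilter isOpen_compl_singleton _ hmem
          · exact h.φ_cont.continuousAt (isOpen_compl_singleton.mem_nhds hmem)
        have hd : HasDerivWithinAt (fun s => x i s - x j s) (v i t - v j t) (Ici t) t :=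
          (((h.x_deriv i t ⟨ht0, htC⟩).sub (h.x_deriv j t ⟨ht0, htC⟩)).mono hsub)
        have hcomp := hΦ.comp_hasDerivWithinAt t hd
        have := hcomp.const_mul (m j)
        simpa [hD, hx, mul_comm, mul_assoc] using this
    have hsum : HasDerivWithinAt (fun s => ∑ j, m j * Phi φ (x i s - x j s))
        (∑ j, D j) (Ici t) t := HasDerivWithinAt.fun_sum fun j _ => hg j
    have hv : HasDerivWithinAt (v i)
        (∑ j ∈ Finset.univ.filter (fun j => x j t ≠ x i t),
          m j * φ (x j t - x i t) * (v j t - v i t)) (Ici t) t :=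
      (h.v_deriv i t ⟨ht0, htC⟩).mono hsub
    have htot := hv.add hsum
    have hzero : (∑ j ∈ Finset.univ.filter (fun j => x j t ≠ x i t),
          m j * φ (x j t - x i t) * (v j t - v i t)) + ∑ j, D j = 0 := by
      have hDsum : ∑ j, D j = ∑ j ∈ Finset.univ.filter (fun j => x j t ≠ x i t),
          m j * (φ (x i t - x j t) * (v i t - v j t)) := by
        rw [Finset.sum_filter]
        refine Finset.sum_congr rfl fun j _ => ?_
        by_cases hx : x j t = x i t <;> simp [hD, hx]
      rw [hDsum, ← Finset.sum_add_distrib]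
      refine Finset.sum_eq_zero fun j _ => ?_
      have he : φ (x j t - x i t) = φ (x i t - x j t) := by
        rw [← neg_sub (x i t) (x j t), h.φ_even]
      rw [he]; ring
    rw [hzero] at htot
    exact htot.congr (fun s _ => hψ i s) (hψ i t)
  -- Step 2: continuity of ψ i within Ici 0 at every t ∈ Ici 0 \ C
  have hcont : ∀ i : Fin N, ∀ t ∈ Ici (0:ℝ) \ C, ContinuousWithinAt (ψ i) (Ici 0) t := by
    intro i t ht
    have hv : ContinuousWithinAt (v i) (Ici 0) t := (h.v_deriv i t ht).continuousWithinAt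
    have hterm : ContinuousWithinAt (fun s => ∑ j, m j * Phi φ (x i s - x j s)) (Ici 0) t := by
      have : ContinuousOn (fun s => ∑ j, m j * Phi φ (x i s - x j s)) (Ici 0) := by
        refine continuousOn_finset_sum _ fun j _ => ?_
        exact continuousOn_const.mul (hPhiCont.comp_continuousOn ((h.x_cont i).sub (h.x_cont j)))
      exact this t ht.1
    have := hv.add hterm
    exact this.congr (fun s _ => hψ i s) (hψ i t)
  -- Step 3: constancy on collision-free closed intervals
  have const : ∀ i : Fin N, ∀ s t : ℝ, 0 ≤ s → s ≤ t → Icc s t ∩ C = ∅ → ψ i s = ψ i t := by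
    intro i s t hs hst hC
    have hmem : ∀ u ∈ Icc s t, u ∈ Ici (0:ℝ) \ C := by
      intro u hu
      refine ⟨le_trans hs hu.1, fun huC => ?_⟩
      exact absurd (mem_inter hu huC) (by simp [hC])
    have hcont' : ContinuousOn (ψ i) (Icc s t) := fun u hu =>
      (hcont i u (hmem u hu)).mono (fun z hz => le_trans hs hz.1)
    have hderiv : ∀ u ∈ Ico s t, HasDerivWithinAt (ψ i) 0 (Ici u) u := fun u hu =>
      key i u (hmem u ⟨hu.1, hu.2.le⟩)
    exact (constant_of_has_deriv_right_zero hcont' hderiv t (right_mem_Icc.mpr hst)).symm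
  refine ⟨?_, const⟩
  -- Step 4: two-sided derivative via local constancy
  intro i t ht
  obtain ⟨ht0, htC⟩ := ht
  have hCclosed : IsClosed C := h.C_fin.isClosed
  obtain ⟨ε, hε, hball⟩ := Metric.isOpen_iff.mp hCclosed.isOpen_compl t htC
  have hloc : ∀ u ∈ Ioo (t - ε) (t + ε) ∩ Ici 0, ψ i u = ψ i t := by
    intro u ⟨huo, hu0⟩
    have hsep : ∀ a b : ℝ, t - ε < a → b < t + ε → Icc a b ∩ C = ∅ := by
      intro a b hab hbb
      rw [eq_empty_iff_forall_notMem]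
      rintro z ⟨hz1, hz2⟩
      exact hball (by
        simp only [Metric.mem_ball, Real.dist_eq, abs_lt]
        constructor <;> [linarith [hz1.1, hz1.2]; linarith [hz1.1, hz1.2]]) hz2
    rcases le_total u t with hut | htu
    · exact (const i u t hu0 hut (hsep u t huo.1 (by linarith [hε]))).symm ▸
        (const i u t hu0 hut (hsep u t huo.1 (by linarith [hε])))
    · exact (const i t u ht0 htu (hsep t u (by linarith [hε]) huo.2)).symm
  have hev : ψ i =ᶠ[nhdsWithin t (Ici 0)] fun _ => ψ i t := by
    have hnb : Ioo (t - ε) (t + ε) ∈ nhds t := Ioo_mem_nhds (by linarith) (by linarith)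
    filter_upwards [mem_nhdsWithin_of_mem_nhds hnb, self_mem_nhdsWithin] with u hu1 hu2
    exact hloc u ⟨hu1, hu2⟩
  exact (hasDerivWithinAt_const t _ (ψ i t)).congr_of_eventuallyEq hev rfl
end

section
/- Suppose (x_i, v_i)_{i=1}^N follows the sticky particle Cucker–Smale dynamics associated to masses (m_i)_{i=1}^N and protocol φ. Define ψ_i(t) = v_i(t) + Σ_{j=1}^N m_j Φ(x_i(t) − x_j(t)), where Φ(x) = ∫_0^x φ(y)dy. Then at every collision time τ ∈ C and for every i, ψ_i(τ) = (Σ_{j ∈ J_i(τ)} m_j ψ_j(τ−)) / (Σ_{j ∈ J_i(τ)} m_j), where ψ_j(τ−) denotes the left limit of ψ_j at τ. -/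
open MeasureTheory Set Filter
open scoped Classical Topology

/-- At every collision time `τ ∈ C`, the quantity
`ψ_i(t) = v_i(t) + Σ_j m_j Φ(x_i(t) − x_j(t))` satisfies the barycentric collision rule
`ψ_i(τ) = (Σ_{j ∈ J_i(τ)} m_j ψ_j(τ−)) / (Σ_{j ∈ J_i(τ)} m_j)`. -/
theorem sticky_CS_psi_collision {N : ℕ} (m : Fin N → ℝ) (φ : ℝ → ℝ)
    (C : Set ℝ) (x v : Fin N → ℝ → ℝ) (h : StickyCS N m φ C x v)
    (ψ : Fin N → ℝ → ℝ)
    (hψ : ∀ i t, ψ i t = v i t + ∑ j, m j * Phi φ (x i t - x j t)) :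
    ∀ τ ∈ C, ∀ i : Fin N,
      ψ i τ = (∑ j ∈ Finset.univ.filter (fun j => x j τ = x i τ),
                  m j * Function.leftLim (ψ j) τ)
              / (∑ j ∈ Finset.univ.filter (fun j => x j τ = x i τ), m j) := by
  intro τ hτC i
  have hτ : (0:ℝ) < τ := h.C_pos hτC
  classical
  -- merge times
  set g : Fin N × Fin N → ℝ := fun p =>
    if hp : ∃ t, 0 ≤ t ∧ t < τ ∧ x p.1 t = x p.2 t then hp.choose else τ/2 with hg
  have hgτ : ∀ p, g p < τ := by
    intro p
    by_cases hp : ∃ t, 0 ≤ t ∧ t < τ ∧ x p.1 t = x p.2 t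
    · simp only [hg, dif_pos hp]; exact hp.choose_spec.2.1
    · simp only [hg, dif_neg hp]; linarith
  have hCfin : (C ∩ Iio τ).Finite := h.C_fin.inter_of_left _
  set F : Finset ℝ := insert (τ/2) (hCfin.toFinset ∪ Finset.image g Finset.univ) with hF
  have hFne : F.Nonempty := ⟨τ/2, Finset.mem_insert_self _ _⟩
  set a : ℝ := F.max' hFne with ha
  have haτ : a < τ := by
    rw [ha, Finset.max'_lt_iff]
    intro y hy
    rcases Finset.mem_insert.1 hy with rfl | hy
    · linarith
    rcases Finset.mem_union.1 hy with hy | hy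
    · exact (hCfin.mem_toFinset.1 hy).2
    · obtain ⟨p, _, rfl⟩ := Finset.mem_image.1 hy; exact hgτ p
  have ha0 : 0 < a :=
    lt_of_lt_of_le (by linarith : (0:ℝ) < τ/2)
      (Finset.le_max' _ _ (Finset.mem_insert_self _ _))
  have haC : ∀ t ∈ Ioo a τ, t ∉ C := by
    intro t ht htC
    have : t ∈ F := Finset.mem_insert_of_mem
      (Finset.mem_union_left _ (hCfin.mem_toFinset.2 ⟨htC, ht.2⟩))
    exact absurd (Finset.le_max' _ _ this) (not_le.2 ht.1)
  -- dichotomy on pairs over the interval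
  have hdich : ∀ j k : Fin N,
      (∀ t ∈ Ioo a τ, x j t = x k t) ∨ (∀ t ∈ Ioo a τ, x j t ≠ x k t) := by
    intro j k
    by_cases hp : ∃ t, 0 ≤ t ∧ t < τ ∧ x j t = x k t
    · left; intro t ht
      have hgle : g (j, k) ≤ a :=
        Finset.le_max' _ _ (Finset.mem_insert_of_mem (Finset.mem_union_right _
          (Finset.mem_image_of_mem g (Finset.mem_univ (j, k)))))
      have hgp : g (j, k) = hp.choose := by simp only [hg, dif_pos hp]
      obtain ⟨h0, hlt, heq⟩ := hp.choose_spec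
      refine h.sticky j k _ t h0 ?_ heq
      rw [← hgp]; linarith [ht.1]
    · right; intro t ht heq
      exact hp ⟨t, le_of_lt (lt_trans ha0 ht.1), ht.2, heq⟩
  have hΦcont : Continuous (Phi φ) := intervalIntegral.continuous_primitive h.φ_locint 0
  -- the derivative of ψ j vanishes on (a, τ)
  have hψderiv : ∀ j : Fin N, ∀ t ∈ Ioo a τ, HasDerivAt (ψ j) 0 t := by
    intro j t ht
    have ht0 : (0:ℝ) < t := lt_trans ha0 ht.1
    have htmem : t ∈ Ici (0:ℝ) \ C := ⟨le_of_lt ht0, haC t ht⟩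
    have hIci : Ici (0:ℝ) ∈ 𝓝 t := Ici_mem_nhds ht0
    have hx' : ∀ k, HasDerivAt (x k) (v k t) t :=
      fun k => (h.x_deriv k t htmem).hasDerivAt hIci
    have hv' : HasDerivAt (v j)
        (∑ k ∈ Finset.univ.filter (fun k => x k t ≠ x j t),
          m k * φ (x k t - x j t) * (v k t - v j t)) t :=
      (h.v_deriv j t htmem).hasDerivAt hIci
    have hk : ∀ k : Fin N, HasDerivAt (fun s => Phi φ (x j s - x k s))
        (if x k t = x j t then 0 else φ (x j t - x k t) * (v j t - v k t)) t := by
      intro k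
      rcases hdich j k with hcase | hcase
      · rw [if_pos (hcase t ht).symm]
        have hev : (fun s => Phi φ (x j s - x k s)) =ᶠ[𝓝 t] fun _ => Phi φ 0 := by
          filter_upwards [Ioo_mem_nhds ht.1 ht.2] with s hs
          rw [hcase s hs, sub_self]
        exact (hasDerivAt_const t (Phi φ 0)).congr_of_eventuallyEq hev
      · rw [if_neg (fun he => hcase t ht he.symm)]
        have hz : HasDerivAt (fun s => x j s - x k s) (v j t - v k t) t :=
          (hx' j).sub (hx' k)
        have hne : x j t - x k t ≠ 0 := sub_ne_zero.2 (hcase t ht)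
        have hφat : ContinuousAt φ (x j t - x k t) :=
          h.φ_cont.continuousAt (isOpen_compl_singleton.mem_nhds hne)
        have hmeas : StronglyMeasurableAtFilter φ (𝓝 (x j t - x k t)) volume :=
          ContinuousOn.stronglyMeasurableAtFilter isOpen_compl_singleton h.φ_cont _ hne
        have hPhi : HasDerivAt (Phi φ) (φ (x j t - x k t)) (x j t - x k t) :=
          intervalIntegral.integral_hasDerivAt_right (h.φ_locint 0 _) hmeas hφat
        exact hPhi.comp t hz
    have hsum : HasDerivAt (fun s => ∑ k, m k * Phi φ (x j s - x k s))
        (∑ k, m k * (if x k t = x j t then 0 else φ (x j t - x k t) * (v j t - v k t))) t :=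
      HasDerivAt.fun_sum (fun k _ => (hk k).const_mul (m k))
    have key := hv'.add hsum
    have hzero : (∑ k ∈ Finset.univ.filter (fun k => x k t ≠ x j t),
          m k * φ (x k t - x j t) * (v k t - v j t))
        + (∑ k, m k * (if x k t = x j t then 0 else φ (x j t - x k t) * (v j t - v k t)))
        = 0 := by
      have h2 : (∑ k, m k * (if x k t = x j t then 0 else φ (x j t - x k t) * (v j t - v k t)))
          = ∑ k ∈ Finset.univ.filter (fun k => x k t ≠ x j t),
              m k * (φ (x j t - x k t) * (v j t - v k t)) := by
        rw [Finset.sum_filter]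
        refine Finset.sum_congr rfl fun k _ => ?_
        by_cases hkj : x k t = x j t <;> simp [hkj]
      rw [h2, ← Finset.sum_add_distrib]
      refine Finset.sum_eq_zero fun k _ => ?_
      have he : φ (x j t - x k t) = φ (x k t - x j t) := by
        rw [← neg_sub (x k t) (x j t), h.φ_even]
      rw [he]; ring
    rw [hzero] at key
    have hfun : ψ j = fun s => v j s + ∑ k, m k * Phi φ (x j s - x k s) := funext (hψ j)
    rw [hfun]; exact key
  -- ψ j is constant on (a, τ)
  have hconst : ∀ j : Fin N, ∀ s ∈ Ioo a τ, ∀ u ∈ Ioo a τ, s ≤ u → ψ j u = ψ j s := by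
    intro j s hs u hu hsu
    have hsub : Icc s u ⊆ Ioo a τ := Icc_subset_Ioo hs.1 hu.2
    have := constant_of_has_deriv_right_zero (f := ψ j) (a := s) (b := u)
      (fun t htt => (hψderiv j t (hsub htt)).continuousAt.continuousWithinAt)
      (fun t htt =>
        (hψderiv j t (hsub (Ico_subset_Icc_self htt))).hasDerivWithinAt)
    exact this u (right_mem_Icc.2 hsu)
  set t0 : ℝ := (a + τ) / 2 with ht0def
  have ht0 : t0 ∈ Ioo a τ := ⟨by rw [ht0def]; linarith, by rw [ht0def]; linarith⟩
  have hψtend : ∀ j : Fin N, Tendsto (ψ j) (𝓝[<] τ) (𝓝 (ψ j t0)) := by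
    intro j
    have hev : ψ j =ᶠ[𝓝[<] τ] fun _ => ψ j t0 := by
      filter_upwards [Ioo_mem_nhdsLT_of_mem (⟨ht0.2, le_refl τ⟩ : τ ∈ Ioc t0 τ)] with s hs
      exact hconst j t0 ht0 s ⟨lt_trans ht0.1 hs.1, hs.2⟩ (le_of_lt hs.1)
    exact tendsto_const_nhds.congr' hev.symm
  have hle : 𝓝[<] τ ≤ 𝓝[Ici 0] τ :=
    nhdsWithin_le_iff.2 (mem_nhdsWithin_of_mem_nhds (Ici_mem_nhds hτ))
  have hS : ∀ j : Fin N, Tendsto (fun s => ∑ k, m k * Phi φ (x j s - x k s)) (𝓝[<] τ)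
      (𝓝 (∑ k, m k * Phi φ (x j τ - x k τ))) := by
    intro j
    refine tendsto_finset_sum _ fun k _ => ?_
    have hxj : Tendsto (x j) (𝓝[<] τ) (𝓝 (x j τ)) :=
      ((h.x_cont j).continuousWithinAt (mem_Ici.2 hτ.le)).mono_left hle
    have hxk : Tendsto (x k) (𝓝[<] τ) (𝓝 (x k τ)) :=
      ((h.x_cont k).continuousWithinAt (mem_Ici.2 hτ.le)).mono_left hle
    exact tendsto_const_nhds.mul ((hΦcont.tendsto _).comp (hxj.sub hxk))
  have hvtend : ∀ j : Fin N, Tendsto (v j) (𝓝[<] τ)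
      (𝓝 (ψ j t0 - ∑ k, m k * Phi φ (x j τ - x k τ))) := by
    intro j
    have := (hψtend j).sub (hS j)
    refine this.congr fun s => ?_
    rw [hψ j s]; ring
  have hneBot : 𝓝[<] τ ≠ ⊥ := (nhdsLT_neBot τ).ne
  have hψleft : ∀ j : Fin N, Function.leftLim (ψ j) τ = ψ j t0 :=
    fun j => leftLim_eq_of_tendsto (hψtend j)
  have hvleft : ∀ j : Fin N, Function.leftLim (v j) τ
      = ψ j t0 - ∑ k, m k * Phi φ (x j τ - x k τ) :=
    fun j => leftLim_eq_of_tendsto (hvtend j)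
  -- final algebra
  have hiJ : i ∈ Finset.univ.filter (fun j => x j τ = x i τ) :=
    Finset.mem_filter.2 ⟨Finset.mem_univ i, rfl⟩
  have hM : 0 < ∑ j ∈ Finset.univ.filter (fun j => x j τ = x i τ), m j :=
    Finset.sum_pos (fun j _ => h.m_pos j) ⟨i, hiJ⟩
  have hsplit : ∑ j ∈ Finset.univ.filter (fun j => x j τ = x i τ),
        m j * Function.leftLim (ψ j) τ
      = (∑ j ∈ Finset.univ.filter (fun j => x j τ = x i τ),
          m j * Function.leftLim (v j) τ)
        + (∑ j ∈ Finset.univ.filter (fun j => x j τ = x i τ), m j)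
          * (∑ k, m k * Phi φ (x i τ - x k τ)) := by
    rw [Finset.sum_mul, ← Finset.sum_add_distrib]
    refine Finset.sum_congr rfl fun j hj => ?_
    have hx : x j τ = x i τ := (Finset.mem_filter.1 hj).2
    rw [hψleft j, hvleft j, hx]
    ring
  rw [hψ i τ, h.collide τ hτC i, hsplit, add_div,
    mul_comm (∑ j ∈ Finset.univ.filter (fun j => x j τ = x i τ), m j),
    mul_div_assoc, div_self hM.ne', mul_one]
end

section
/- (Barycentric Lemma) Suppose (x_i, v_i)_{i=1}^N follows the sticky particle Cucker–Smale dynamics associated to masses (m_i)_{i=1}^N and protocol φ, and define ψ_i(t) = v_i(t) + Σ_{j=1}^N m_j Φ(x_i(t) − x_j(t)) with Φ(x) = ∫_0^x φ(y)dy. Fix i ∈ {1,…,N} and t > 0, and set i_*(t) = min J_i(t), i^*(t) = max J_i(t). Then for every k ∈ J_i(t): (Σ_{j=i_*(t)}^k m_j ψ_j(t−)) / (Σ_{j=i_*(t)}^k m_j) ≥ (Σ_{j∈J_i(t)} m_j ψ_j(t−)) / (Σ_{j∈J_i(t)} m_j) = ψ_i(t+) ≥ (Σ_{j=k}^{i^*(t)}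 m_j ψ_j(t−)) / (Σ_{j=k}^{i^*(t)} m_j), where ψ_j(t−) and ψ_i(t+) denote left and right limits at t (with ψ_i(t+) = ψ_i(t) by right-continuity). -/
open MeasureTheory Set Filter
open scoped Classical

section AuxLemmas

lemma Phi_continuous' {φ : ℝ → ℝ} (hint : ∀ a b : ℝ, IntervalIntegrable φ volume a b) :
    Continuous (Phi φ) :=
  intervalIntegral.continuous_primitive hint 0

lemma Phi_zero (φ : ℝ → ℝ) : Phi φ 0 = 0 := intervalIntegral.integral_same

lemma Phi_hasDerivAt {φ : ℝ → ℝ} (hint : ∀ a b : ℝ, IntervalIntegrable φ volume a b)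
    (hcont : ContinuousOn φ {(0:ℝ)}ᶜ) {z : ℝ} (hz : z ≠ 0) :
    HasDerivAt (Phi φ) (φ z) z :=
  intervalIntegral.integral_hasDerivAt_right (hint 0 z)
    (hcont.stronglyMeasurableAtFilter isOpen_compl_singleton z hz)
    (hcont.continuousAt (compl_singleton_mem_nhds hz))

lemma avg_le_avg_left {ι : Type*} [DecidableEq ι] (w c : ι → ℝ) (A B : Finset ι) (hd : Disjoint A B)
    (hA : A.Nonempty) (hwA : ∀ j ∈ A, 0 < w j) (hwB : ∀ j ∈ B, 0 < w j) (γ : ℝ)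
    (h1 : ∀ a ∈ A, γ ≤ c a) (h2 : ∀ b ∈ B, c b ≤ γ) :
    (∑ j ∈ A ∪ B, w j * c j) / (∑ j ∈ A ∪ B, w j) ≤ (∑ j ∈ A, w j * c j) / (∑ j ∈ A, w j) := by
  have hSA : 0 < ∑ j ∈ A, w j := Finset.sum_pos hwA hA
  have hSB : (0:ℝ) ≤ ∑ j ∈ B, w j := Finset.sum_nonneg fun j hj => (hwB j hj).le
  have hTA : γ * (∑ j ∈ A, w j) ≤ ∑ j ∈ A, w j * c j := by
    rw [Finset.mul_sum]
    refine Finset.sum_le_sum fun j hj => ?_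
    rw [mul_comm]
    exact mul_le_mul_of_nonneg_left (h1 j hj) (hwA j hj).le
  have hTB : (∑ j ∈ B, w j * c j) ≤ γ * ∑ j ∈ B, w j := by
    rw [Finset.mul_sum]
    refine Finset.sum_le_sum fun j hj => ?_
    rw [mul_comm γ]
    exact mul_le_mul_of_nonneg_left (h2 j hj) (hwB j hj).le
  rw [Finset.sum_union hd, Finset.sum_union hd, div_le_div_iff₀ (by linarith) hSA]
  nlinarith [mul_nonneg (sub_nonneg.2 hTA) hSB, mul_nonneg (sub_nonneg.2 hTB) hSA.le]

namespace StickyCS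

variable {N : ℕ} {m : Fin N → ℝ} {φ : ℝ → ℝ} {C : Set ℝ} {x v : Fin N → ℝ → ℝ}

lemma xHasDerivAt (h : StickyCS N m φ C x v) (j : Fin N) {s : ℝ} (hs : 0 < s) (hsC : s ∉ C) :
    HasDerivAt (x j) (v j s) s :=
  (h.x_deriv j s ⟨hs.le, hsC⟩).hasDerivAt (Ici_mem_nhds hs)

lemma vHasDerivAt (h : StickyCS N m φ C x v) (j : Fin N) {s : ℝ} (hs : 0 < s) (hsC : s ∉ C) :
    HasDerivAt (v j)
      (∑ l ∈ Finset.univ.filter (fun l => x l s ≠ x j s),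
        m l * φ (x l s - x j s) * (v l s - v j s)) s :=
  (h.v_deriv j s ⟨hs.le, hsC⟩).hasDerivAt (Ici_mem_nhds hs)

/-- If two particles have met at some time `s ≤ u`, their velocities agree at any
non-collision time `u > 0`. -/
lemma vel_eq (h : StickyCS N m φ C x v) {j l : Fin N} {s u : ℝ} (hs : 0 ≤ s) (hsu : s ≤ u)
    (hu : 0 < u) (huC : u ∉ C) (hx : x j s = x l s) : v j u = v l u := by
  have heq : ∀ w ∈ Ici u, x j w - x l w = 0 := fun w hw =>
    sub_eq_zero.2 (h.sticky j l s w hs (hsu.trans hw) hx)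
  have hg1 : HasDerivWithinAt (fun w => x j w - x l w) (v j u - v l u) (Ici u) u :=
    (((h.xHasDerivAt j hu huC).sub (h.xHasDerivAt l hu huC))).hasDerivWithinAt
  have hg2 : HasDerivWithinAt (fun w => x j w - x l w) 0 (Ici u) u :=
    (hasDerivWithinAt_const u (Ici u) (0:ℝ)).congr heq (heq u self_mem_Ici)
  have := (uniqueDiffOn_Ici u u self_mem_Ici).eq_deriv _ hg1 hg2
  linarith [this]

/-- The diagonal quantity `ψ j` is constant on collision-free intervals. -/
lemma psi_const (h : StickyCS N m φ C x v) (ψ : Fin N → ℝ → ℝ)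
    (hψ : ∀ i t, ψ i t = v i t + ∑ j, m j * Phi φ (x i t - x j t))
    {a b : ℝ} (ha : 0 < a) (hC : ∀ s ∈ Icc a b, s ∉ C) (j : Fin N) :
    ∀ s ∈ Icc a b, ψ j s = ψ j a := by
  have hψj : ψ j = fun u => v j u + ∑ l, m l * Phi φ (x j u - x l u) := funext fun u => hψ j u
  have hIcc : Icc a b ⊆ Ici (0:ℝ) := fun s hs => le_trans ha.le hs.1
  have hpos : ∀ s ∈ Icc a b, 0 < s := fun s hs => lt_of_lt_of_le ha hs.1
  have hcont : ContinuousOn (ψ j) (Icc a b) := by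
    rw [hψj]
    apply ContinuousOn.add
    · intro s hs
      exact ((h.vHasDerivAt j (hpos s hs) (hC s hs)).continuousAt).continuousWithinAt
    · apply continuousOn_finset_sum
      intro l _
      exact continuousOn_const.mul ((Phi_continuous' h.φ_locint).comp_continuousOn
        (((h.x_cont j).mono hIcc).sub ((h.x_cont l).mono hIcc)))
  have hderiv : ∀ s ∈ Ico a b, HasDerivWithinAt (ψ j) 0 (Ici s) s := by
    intro s hs
    have hsIcc : s ∈ Icc a b := ⟨hs.1, hs.2.le⟩
    have hs0 : 0 < s := hpos s hsIcc
    have hsC : s ∉ C := hC s hsIcc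
    set c : Fin N → ℝ := fun l =>
      if x l s = x j s then 0 else φ (x j s - x l s) * (v j s - v l s) with hc
    have hterm : ∀ l : Fin N,
        HasDerivWithinAt (fun u => Phi φ (x j u - x l u)) (c l) (Ici s) s := by
      intro l
      by_cases hxe : x l s = x j s
      · have hz : ∀ u ∈ Ici s, Phi φ (x j u - x l u) = 0 := fun u hu => by
          rw [sub_eq_zero.2 (h.sticky j l s u hs0.le hu hxe.symm), Phi_zero]
        simpa [hc, hxe] using
          (hasDerivWithinAt_const s (Ici s) (0:ℝ)).congr hz (hz s self_mem_Ici)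
      · have hinner : HasDerivAt (fun u => x j u - x l u) (v j s - v l s) s :=
          (h.xHasDerivAt j hs0 hsC).sub (h.xHasDerivAt l hs0 hsC)
        have houter : HasDerivAt (Phi φ) (φ (x j s - x l s)) (x j s - x l s) :=
          Phi_hasDerivAt h.φ_locint h.φ_cont (sub_ne_zero.2 fun e => hxe e.symm)
        have hcomp := HasDerivAt.comp s houter hinner
        simpa [hc, hxe, Function.comp_def] using hcomp.hasDerivWithinAt
    have hsum : HasDerivWithinAt (fun u => ∑ l, m l * Phi φ (x j u - x l u))
        (∑ l, m l * c l) (Ici s) s :=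
      HasDerivWithinAt.fun_sum fun l _ => (hterm l).const_mul (m l)
    have hv : HasDerivWithinAt (v j)
        (∑ l ∈ Finset.univ.filter (fun l => x l s ≠ x j s),
          m l * φ (x l s - x j s) * (v l s - v j s)) (Ici s) s :=
      (h.vHasDerivAt j hs0 hsC).hasDerivWithinAt
    have hzero : (∑ l ∈ Finset.univ.filter (fun l => x l s ≠ x j s),
          m l * φ (x l s - x j s) * (v l s - v j s)) + (∑ l, m l * c l) = 0 := by
      have e1 : (∑ l, m l * c l)
          = ∑ l ∈ Finset.univ.filter (fun l => x l s ≠ x j s), m l * c l := by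
        symm
        apply Finset.sum_filter_of_ne
        intro l _ hne
        intro hP'
        exact hne (by simp [hc, hP'])
      rw [e1, ← Finset.sum_add_distrib]
      apply Finset.sum_eq_zero
      intro l hl
      have hne : x l s ≠ x j s := (Finset.mem_filter.1 hl).2
      have hφe : φ (x j s - x l s) = φ (x l s - x j s) := by
        rw [← neg_sub (x l s) (x j s), h.φ_even]
      simp only [hc, if_neg hne, hφe]
      ring
    have htotal := hv.add hsum
    rw [hzero] at htotal
    rw [hψj]
    exact htotal
  exact constant_of_has_deriv_right_zero hcont hderiv

end StickyCS

end AuxLemmas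

open scoped Topology

/-- **Barycentric Lemma.** Fix `i` and `t > 0`, let `J = J_i(t)` be the set of
particles stuck to particle `i` at time `t`, with extreme indices `i_* = min J`,
`i^* = max J`. Then for every `k ∈ J`, the average of `ψ_j(t−)` over `j = i_*, …, k` is at
least the average over all of `J`, which equals `ψ_i(t+) = ψ_i(t)`, which in turn is at
least the average over `j = k, …, i^*`. -/
theorem sticky_CS_barycentric {N : ℕ} (m : Fin N → ℝ) (φ : ℝ → ℝ)
    (C : Set ℝ) (x v : Fin N → ℝ → ℝ) (h : StickyCS N m φ C x v)
    (ψ : Fin N → ℝ → ℝ)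
    (hψ : ∀ i t, ψ i t = v i t + ∑ j, m j * Phi φ (x i t - x j t))
    (i : Fin N) (t : ℝ) (ht : 0 < t)
    (J : Finset (Fin N)) (hJ : J = Finset.univ.filter (fun j => x j t = x i t))
    (istar itop : Fin N)
    (histar : istar = J.min' ⟨i, by simp [hJ]⟩)
    (hitop : itop = J.max' ⟨i, by simp [hJ]⟩)
    (k : Fin N) (hk : k ∈ J) :
    ((∑ j ∈ Finset.Icc istar k, m j * Function.leftLim (ψ j) t)
        / (∑ j ∈ Finset.Icc istar k, m j)
      ≥ (∑ j ∈ J, m j * Function.leftLim (ψ j) t) / (∑ j ∈ J, m j)) ∧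
    ((∑ j ∈ J, m j * Function.leftLim (ψ j) t) / (∑ j ∈ J, m j) = ψ i t) ∧
    (ψ i t ≥ (∑ j ∈ Finset.Icc k itop, m j * Function.leftLim (ψ j) t)
        / (∑ j ∈ Finset.Icc k itop, m j)) := by
  have hiJ : i ∈ J := by simp [hJ]
  have hJne : J.Nonempty := ⟨i, hiJ⟩
  have hmemJ : ∀ j, j ∈ J ↔ x j t = x i t := fun j => by simp [hJ]
  have hne : (𝓝[<] t) ≠ ⊥ := (nhdsLT_neBot t).ne
  -- a collision-free left neighborhood of t
  obtain ⟨a, ha0, hat, haC⟩ : ∃ a, 0 < a ∧ a < t ∧ ∀ s, a ≤ s → s < t → s ∉ C := by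
    by_cases hF : (C ∩ Iio t).Nonempty
    · have hFfin : (C ∩ Iio t).Finite := h.C_fin.subset inter_subset_left
      have hFne : hFfin.toFinset.Nonempty := by
        rwa [Set.Finite.toFinset_nonempty]
      set M := hFfin.toFinset.max' hFne with hM
      have hMmem : M ∈ C ∩ Iio t := by
        rw [← Set.Finite.mem_toFinset hFfin]
        exact hFfin.toFinset.max'_mem hFne
      have hM0 : 0 < M := h.C_pos hMmem.1
      have hMt : M < t := hMmem.2
      refine ⟨(M + t) / 2, by linarith, by linarith, ?_⟩
      intro s h1 h2 hsC
      have : s ∈ hFfin.toFinset := by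
        rw [Set.Finite.mem_toFinset]
        exact ⟨hsC, h2⟩
      have := hFfin.toFinset.le_max' s this
      rw [← hM] at this
      linarith
    · exact ⟨t / 2, by linarith, by linarith, fun s _ h2 hsC => hF ⟨s, hsC, h2⟩⟩
  -- ψ is constant on [a, t)
  have hc : ∀ (j : Fin N), ∀ s ∈ Ico a t, ψ j s = ψ j a := by
    intro j s hs
    exact h.psi_const ψ hψ ha0
      (fun u hu => haC u hu.1 (lt_of_le_of_lt hu.2 hs.2)) j s ⟨hs.1, le_refl s⟩
  have hψtend : ∀ j, Tendsto (ψ j) (𝓝[<] t) (𝓝 (ψ j a)) := by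
    intro j
    have hev : (fun _ => ψ j a) =ᶠ[𝓝[<] t] ψ j := by
      filter_upwards [Ioo_mem_nhdsLT hat] with s hs
      exact (hc j s ⟨hs.1.le, hs.2⟩).symm
    exact tendsto_const_nhds.congr' hev
  have hψll : ∀ j, Function.leftLim (ψ j) t = ψ j a := fun j =>
    leftLim_eq_of_tendsto (hψtend j)
  -- left limits of the velocities
  set P : ℝ := ∑ l, m l * Phi φ (x i t - x l t) with hP
  have hxc : ∀ j : Fin N, ContinuousAt (x j) t := fun j =>
    (h.x_cont j).continuousAt (Ici_mem_nhds ht)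
  have hQ : ∀ j : Fin N, Tendsto (fun s => ∑ l, m l * Phi φ (x j s - x l s)) (𝓝 t)
      (𝓝 (∑ l, m l * Phi φ (x j t - x l t))) := by
    intro j
    apply tendsto_finset_sum
    intro l _
    exact tendsto_const_nhds.mul
      (((Phi_continuous' h.φ_locint).tendsto _).comp ((hxc j).sub (hxc l)))
  have hvtend : ∀ j : Fin N, Tendsto (v j) (𝓝[<] t)
      (𝓝 (ψ j a - ∑ l, m l * Phi φ (x j t - x l t))) := by
    intro j
    have hrep : ∀ s, v j s = ψ j s - ∑ l, m l * Phi φ (x j s - x l s) := fun s => by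
      rw [hψ j s]; ring
    have := (hψtend j).sub ((hQ j).mono_left nhdsWithin_le_nhds)
    exact this.congr fun s => (hrep s).symm
  have hvll : ∀ j : Fin N,
      Function.leftLim (v j) t = ψ j a - ∑ l, m l * Phi φ (x j t - x l t) := fun j =>
    leftLim_eq_of_tendsto (hvtend j)
  have hvllJ : ∀ j ∈ J, Function.leftLim (v j) t = ψ j a - P := by
    intro j hj
    rw [hvll j, (hmemJ j).1 hj]
  -- the key averaged momentum identity
  have hMpos : 0 < ∑ j ∈ J, m j := Finset.sum_pos (fun j _ => h.m_pos j) hJne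
  have hsumv : ∑ j ∈ J, m j * Function.leftLim (v j) t = (∑ j ∈ J, m j) * v i t := by
    by_cases htC : t ∈ C
    · have hcol := h.collide t htC i
      rw [← hJ] at hcol
      rw [hcol, mul_div_cancel₀ _ hMpos.ne']
    · have hvt : ∀ j ∈ J, Function.leftLim (v j) t = v i t := by
        intro j hj
        have h1 : v j t = v i t := h.vel_eq ht.le le_rfl ht htC ((hmemJ j).1 hj)
        have h2 : ContinuousAt (v j) t := (h.vHasDerivAt j ht htC).continuousAt
        rw [leftLim_eq_of_tendsto (h2.tendsto.mono_left nhdsWithin_le_nhds), h1]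
      rw [Finset.sum_congr rfl (fun j hj => by rw [hvt j hj]), ← Finset.sum_mul]
  have hsumψ : ∑ j ∈ J, m j * Function.leftLim (ψ j) t = (∑ j ∈ J, m j) * ψ i t := by
    have e1 : ∀ j ∈ J,
        m j * Function.leftLim (ψ j) t = m j * Function.leftLim (v j) t + m j * P := by
      intro j hj
      rw [hψll j, hvllJ j hj]
      ring
    rw [Finset.sum_congr rfl e1, Finset.sum_add_distrib, hsumv, ← Finset.sum_mul, hψ i t]
    ring
  have heq : (∑ j ∈ J, m j * Function.leftLim (ψ j) t) / (∑ j ∈ J, m j) = ψ i t := by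
    rw [hsumψ, mul_comm, mul_div_assoc, div_self hMpos.ne', mul_one]
  -- antitonicity of the left limits across the cluster
  have hanti : ∀ j l : Fin N, j ∈ J → l ∈ J → j ≤ l →
      Function.leftLim (ψ l) t ≤ Function.leftLim (ψ j) t := by
    intro j l hjJ hlJ hjl
    rw [hψll j, hψll l]
    by_contra hlt
    push_neg at hlt
    have hxe : x l t = x j t := by rw [(hmemJ l).1 hlJ, (hmemJ j).1 hjJ]
    set d := ψ l a - ψ j a with hd
    have hd0 : 0 < d := sub_pos.2 hlt
    have hten : Tendsto (fun s => v l s - v j s) (𝓝[<] t) (𝓝 d) := by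
      have key : (ψ l a - ∑ l', m l' * Phi φ (x l t - x l' t))
          - (ψ j a - ∑ l', m l' * Phi φ (x j t - x l' t)) = d := by
        rw [hxe]; ring
      rw [← key]
      exact (hvtend l).sub (hvtend j)
    have hev : ∀ᶠ s in 𝓝[<] t, 0 < v l s - v j s := hten.eventually (eventually_gt_nhds hd0)
    obtain ⟨c0, hc0t, hc0⟩ : ∃ c0 ∈ Iio t, Ioo c0 t ⊆ {s | 0 < v l s - v j s} :=
      mem_nhdsLT_iff_exists_Ioo_subset.1 hev
    set c1 := max c0 a with hc1
    have hc1t : c1 < t := max_lt hc0t hat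
    have hc1a : a ≤ c1 := le_max_right c0 a
    have hsub : Icc c1 t ⊆ Ici (0:ℝ) := fun s hs => le_trans (by linarith) hs.1
    have hgc : ContinuousOn (fun s => x l s - x j s) (Icc c1 t) :=
      ((h.x_cont l).mono hsub).sub ((h.x_cont j).mono hsub)
    have hmono : StrictMonoOn (fun s => x l s - x j s) (Icc c1 t) := by
      apply strictMonoOn_of_deriv_pos (convex_Icc _ _) hgc
      intro s hs
      rw [interior_Icc] at hs
      have hs0 : 0 < s := lt_trans (lt_of_lt_of_le ha0 hc1a) hs.1
      have hsC : s ∉ C := haC s (le_of_lt (lt_of_le_of_lt hc1a hs.1)) hs.2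
      have hD : HasDerivAt (fun s => x l s - x j s) (v l s - v j s) s :=
        (h.xHasDerivAt l hs0 hsC).sub (h.xHasDerivAt j hs0 hsC)
      rw [hD.deriv]
      exact hc0 ⟨lt_of_le_of_lt (le_max_left c0 a) hs.1, hs.2⟩
    set s1 := (c1 + t) / 2 with hs1def
    have hs1mem : s1 ∈ Icc c1 t := ⟨by simp only [hs1def]; linarith, by simp only [hs1def]; linarith⟩
    have hlt2 : x l s1 - x j s1 < x l t - x j t :=
      hmono hs1mem (right_mem_Icc.2 hc1t.le) (by simp only [hs1def]; linarith)
    have hgt : x l t - x j t = 0 := sub_eq_zero.2 hxe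
    have hge : 0 ≤ x l s1 - x j s1 :=
      sub_nonneg.2 (h.x_ord j l hjl s1 (le_trans (by linarith) hs1mem.1))
    linarith
  -- interval structure of the cluster
  have histarJ : istar ∈ J := histar ▸ J.min'_mem _
  have hitopJ : itop ∈ J := hitop ▸ J.max'_mem _
  have histar_le : ∀ j ∈ J, istar ≤ j := fun j hj => histar ▸ J.min'_le j hj
  have hle_itop : ∀ j ∈ J, j ≤ itop := fun j hj => hitop ▸ J.le_max' j hj
  have hIccJ : ∀ j : Fin N, istar ≤ j → j ≤ itop → j ∈ J := by
    intro j h1 h2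
    rw [hmemJ]
    have l1 := h.x_ord istar j h1 t ht.le
    have l2 := h.x_ord j itop h2 t ht.le
    have e1 : x istar t = x i t := (hmemJ istar).1 histarJ
    have e2 : x itop t = x i t := (hmemJ itop).1 hitopJ
    linarith
  have hkistar : istar ≤ k := histar_le k hk
  have hkitop : k ≤ itop := hle_itop k hk
  have hsub1 : ∀ j ∈ Finset.Icc istar k, j ∈ J := fun j hj => by
    rw [Finset.mem_Icc] at hj; exact hIccJ j hj.1 (le_trans hj.2 hkitop)
  have hsub2 : ∀ j ∈ Finset.Ioc k itop, j ∈ J := fun j hj => by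
    rw [Finset.mem_Ioc] at hj; exact hIccJ j (le_trans hkistar hj.1.le) hj.2
  have hsub3 : ∀ j ∈ Finset.Icc k itop, j ∈ J := fun j hj => by
    rw [Finset.mem_Icc] at hj; exact hIccJ j (le_trans hkistar hj.1) hj.2
  have hsub4 : ∀ j ∈ Finset.Ico istar k, j ∈ J := fun j hj => by
    rw [Finset.mem_Ico] at hj; exact hIccJ j hj.1 (le_trans hj.2.le hkitop)
  have hunion1 : Finset.Icc istar k ∪ Finset.Ioc k itop = J := by
    ext j
    simp only [Finset.mem_union, Finset.mem_Icc, Finset.mem_Ioc]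
    constructor
    · rintro (⟨h1, h2⟩ | ⟨h1, h2⟩)
      · exact hIccJ j h1 (h2.trans hkitop)
      · exact hIccJ j (hkistar.trans h1.le) h2
    · intro hj
      rcases le_or_gt j k with hle | hgt
      · exact Or.inl ⟨histar_le j hj, hle⟩
      · exact Or.inr ⟨hgt, hle_itop j hj⟩
  have hunion2 : Finset.Icc k itop ∪ Finset.Ico istar k = J := by
    ext j
    simp only [Finset.mem_union, Finset.mem_Icc, Finset.mem_Ico]
    constructor
    · rintro (⟨h1, h2⟩ | ⟨h1, h2⟩)
      · exact hIccJ j (hkistar.trans h1) h2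
      · exact hIccJ j h1 (h2.le.trans hkitop)
    · intro hj
      rcases le_or_gt j k with hle | hgt
      · rcases eq_or_lt_of_le hle with he | hlt
        · exact Or.inl ⟨he.ge, he.le.trans hkitop⟩
        · exact Or.inr ⟨histar_le j hj, hlt⟩
      · exact Or.inl ⟨hgt.le, hle_itop j hj⟩
  have hdisj1 : Disjoint (Finset.Icc istar k) (Finset.Ioc k itop) := by
    rw [Finset.disjoint_left]
    intro j h1 h2
    rw [Finset.mem_Icc] at h1
    rw [Finset.mem_Ioc] at h2
    exact absurd h1.2 (not_le.2 h2.1)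
  have hdisj2 : Disjoint (Finset.Icc k itop) (Finset.Ico istar k) := by
    rw [Finset.disjoint_left]
    intro j h1 h2
    rw [Finset.mem_Icc] at h1
    rw [Finset.mem_Ico] at h2
    exact absurd h1.1 (not_le.2 h2.2)
  -- part 1
  have part1 : (∑ j ∈ Finset.Icc istar k, m j * Function.leftLim (ψ j) t)
      / (∑ j ∈ Finset.Icc istar k, m j)
      ≥ (∑ j ∈ J, m j * Function.leftLim (ψ j) t) / (∑ j ∈ J, m j) := by
    have h1 := avg_le_avg_left m (fun j => Function.leftLim (ψ j) t)
      (Finset.Icc istar k) (Finset.Ioc k itop) hdisj1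
      ⟨k, Finset.mem_Icc.2 ⟨hkistar, le_rfl⟩⟩ (fun j _ => h.m_pos j) (fun j _ => h.m_pos j)
      (Function.leftLim (ψ k) t)
      (fun j hj => hanti j k (hsub1 j hj) hk (Finset.mem_Icc.1 hj).2)
      (fun j hj => hanti k j hk (hsub2 j hj) (Finset.mem_Ioc.1 hj).1.le)
    simp only [hunion1] at h1
    exact h1
  -- part 3
  have part3 : ψ i t ≥ (∑ j ∈ Finset.Icc k itop, m j * Function.leftLim (ψ j) t)
      / (∑ j ∈ Finset.Icc k itop, m j) := by
    have h3 := avg_le_avg_left m (fun j => -Function.leftLim (ψ j) t)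
      (Finset.Icc k itop) (Finset.Ico istar k) hdisj2
      ⟨k, Finset.mem_Icc.2 ⟨le_rfl, hkitop⟩⟩ (fun j _ => h.m_pos j) (fun j _ => h.m_pos j)
      (-Function.leftLim (ψ k) t)
      (fun j hj => neg_le_neg (hanti k j hk (hsub3 j hj) (Finset.mem_Icc.1 hj).1))
      (fun j hj => neg_le_neg (hanti j k (hsub4 j hj) hk (Finset.mem_Ico.1 hj).2.le))
    simp only [hunion2] at h3
    have e : ∀ S : Finset (Fin N),
        ∑ j ∈ S, m j * -Function.leftLim (ψ j) t
          = -∑ j ∈ S, m j * Function.leftLim (ψ j) t := fun S => by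
      simp [mul_neg]
    rw [e, e, neg_div, neg_div, neg_le_neg_iff, heq] at h3
    exact h3
  exact ⟨part1, heq, part3⟩
end

section
/- Let M⁰ : ℝ → [−1/2,1/2] be nondecreasing and right-continuous with M⁰(x) = 1/2 for x ≥ R⁰ and M⁰(x) = −1/2 for x ≤ −R⁰, for some R⁰ > 0. Let m_1,…,m_N > 0 with Σ m_i = 1, set θ_i = −1/2 + Σ_{j=1}^i m_j for i = 0,…,N, let x_i⁰ = inf{x ∈ ℝ : M⁰(x) ≥ θ_i} for i = 1,…,N, and define the step function M_N⁰(x) = −1/2 + Σ_{i=1}^N m_i·1_{x ≥ x_i⁰}. Then ‖M_N⁰ − M⁰‖_{L¹(ℝ)} ≤ 2R⁰ · max_{1≤i≤N} m_i. -/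
open MeasureTheory Set

/-- Let `M⁰ : ℝ → [−1/2,1/2]` be nondecreasing and right-continuous with
`M⁰ = 1/2` on `[R⁰,∞)` and `M⁰ = −1/2` on `(−∞,−R⁰]`. Given positive masses summing to one,
`θ_i = −1/2 + Σ_{j ≤ i} m_j` and `x_i⁰ = inf{x : M⁰(x) ≥ θ_i}`, the step function
`M_N⁰(x) = −1/2 + Σ_i m_i 1_{x ≥ x_i⁰}` satisfies
`‖M_N⁰ − M⁰‖_{L¹} ≤ 2R⁰ · max_i m_i`. -/
theorem discretized_initial_data_L1_error {N : ℕ} (hN : 0 < N)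
    (M0 : ℝ → ℝ) (R0 : ℝ) (hR0 : 0 < R0)
    (hrange : ∀ x, M0 x ∈ Icc (-(1:ℝ)/2) (1/2))
    (hmono : Monotone M0)
    (hrc : ∀ x : ℝ, ContinuousWithinAt M0 (Ici x) x)
    (hright : ∀ x : ℝ, R0 ≤ x → M0 x = 1/2)
    (hleft : ∀ x : ℝ, x ≤ -R0 → M0 x = -(1/2))
    (m : Fin N → ℝ) (hm : ∀ i, 0 < m i) (hsum : ∑ i, m i = 1)
    (θ : Fin N → ℝ) (hθ : ∀ i, θ i = -(1/2) + ∑ j ∈ Finset.Iic i, m j)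
    (x0 : Fin N → ℝ) (hx0 : ∀ i, x0 i = sInf {x : ℝ | θ i ≤ M0 x})
    (MN0 : ℝ → ℝ)
    (hMN0 : ∀ x, MN0 x = -(1/2) + ∑ i, m i * (if x0 i ≤ x then (1:ℝ) else 0)) :
    (∫ x : ℝ, |MN0 x - M0 x|)
      ≤ 2 * R0 * Finset.univ.sup' ⟨⟨0, hN⟩, Finset.mem_univ _⟩ m := by
  classical
  set c := Finset.univ.sup' ⟨⟨0, hN⟩, Finset.mem_univ _⟩ m with hc
  have hc_pos : 0 < c := lt_of_lt_of_le (hm ⟨0, hN⟩) (Finset.le_sup' m (Finset.mem_univ _))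
  have hmc : ∀ i, m i ≤ c := fun i => Finset.le_sup' m (Finset.mem_univ i)
  have hθlb : ∀ i, -(1/2 : ℝ) < θ i := by
    intro i
    rw [hθ i]
    have : 0 < ∑ j ∈ Finset.Iic i, m j :=
      Finset.sum_pos (fun j _ => hm j) ⟨i, Finset.mem_Iic.2 le_rfl⟩
    linarith
  have hθub : ∀ i, θ i ≤ 1/2 := by
    intro i
    rw [hθ i]
    have h1 : ∑ j ∈ Finset.Iic i, m j ≤ ∑ j, m j :=
      Finset.sum_le_sum_of_subset_of_nonneg (Finset.subset_univ _) (fun j _ _ => (hm j).le)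
    rw [hsum] at h1; linarith
  have hrange' : ∀ x, -(1/2 : ℝ) ≤ M0 x ∧ M0 x ≤ 1/2 := by
    intro x
    obtain ⟨h1, h2⟩ := hrange x
    exact ⟨by linarith, h2⟩
  have hmemR0 : ∀ i, θ i ≤ M0 R0 := fun i => by rw [hright R0 le_rfl]; exact hθub i
  have hTlb : ∀ i, ∀ y ∈ {x : ℝ | θ i ≤ M0 x}, -R0 ≤ y := by
    intro i y hy
    by_contra h
    push_neg at h
    rw [Set.mem_setOf_eq, hleft y h.le] at hy
    exact absurd hy (not_le.2 (hθlb i))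
  have hTbdd : ∀ i, BddBelow {x : ℝ | θ i ≤ M0 x} := fun i => ⟨-R0, hTlb i⟩
  have hTne : ∀ i, ({x : ℝ | θ i ≤ M0 x}).Nonempty := fun i => ⟨R0, hmemR0 i⟩
  have hx0ub : ∀ i, x0 i ≤ R0 := fun i => by
    rw [hx0 i]; exact csInf_le (hTbdd i) (hmemR0 i)
  have hx0lb : ∀ i, -R0 ≤ x0 i := fun i => by
    rw [hx0 i]; exact le_csInf (hTne i) (hTlb i)
  have hA : ∀ i x, x0 i ≤ x → θ i ≤ M0 x := by
    intro i x hix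
    have h1 : θ i ≤ M0 (x0 i) := by
      have ht : Filter.Tendsto M0 (nhdsWithin (x0 i) (Set.Ioi (x0 i))) (nhds (M0 (x0 i))) :=
        (hrc (x0 i)).mono_left (nhdsWithin_mono _ Set.Ioi_subset_Ici_self)
      refine ge_of_tendsto ht ?_
      filter_upwards [self_mem_nhdsWithin] with y hy
      have hy' : sInf {x : ℝ | θ i ≤ M0 x} < y := by rw [← hx0 i]; exact hy
      obtain ⟨t, ht', htl⟩ := (csInf_lt_iff (hTbdd i) (hTne i)).1 hy'
      exact le_trans ht' (hmono htl.le)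
    exact h1.trans (hmono hix)
  have hB : ∀ i x, x < x0 i → M0 x < θ i := by
    intro i x hix
    by_contra h
    push_neg at h
    have : x0 i ≤ x := by rw [hx0 i]; exact csInf_le (hTbdd i) h
    exact absurd hix (not_lt.2 this)
  have hMN0' : ∀ x, MN0 x = -(1/2 : ℝ) + ∑ i ∈ Finset.univ.filter (fun i => x0 i ≤ x), m i := by
    intro x
    rw [hMN0 x, Finset.sum_filter]
    congr 1
    apply Finset.sum_congr rfl
    intro i _
    by_cases h : x0 i ≤ x <;> simp [h]
  have hle : ∀ x, MN0 x ≤ M0 x := by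
    intro x
    rw [hMN0' x]
    rcases Finset.eq_empty_or_nonempty (Finset.univ.filter (fun i => x0 i ≤ x)) with hS | hS
    · rw [hS, Finset.sum_empty]
      have := (hrange' x).1; linarith
    · set S := Finset.univ.filter (fun i => x0 i ≤ x) with hSdef
      obtain hi := S.max'_mem hS
      have hmem : x0 (S.max' hS) ≤ x := (Finset.mem_filter.1 hi).2
      have hsub : S ⊆ Finset.Iic (S.max' hS) := fun j hj => Finset.mem_Iic.2 (S.le_max' j hj)
      have h2 : ∑ i ∈ S, m i ≤ ∑ j ∈ Finset.Iic (S.max' hS), m j :=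
        Finset.sum_le_sum_of_subset_of_nonneg hsub (fun j _ _ => (hm j).le)
      have h3 := hA (S.max' hS) x hmem
      rw [hθ] at h3
      linarith
  have hdiff : ∀ x, M0 x - MN0 x ≤ c := by
    intro x
    rw [hMN0' x]
    set S := Finset.univ.filter (fun i => x0 i ≤ x) with hSdef
    by_cases hSu : S = Finset.univ
    · rw [hSu, hsum]
      have := (hrange' x).2; linarith
    · have hCne : (Finset.univ \ S).Nonempty := by
        rw [Finset.sdiff_nonempty]
        exact fun h => hSu (Finset.univ_subset_iff.1 h)
      set i' := (Finset.univ \ S).min' hCne with hi'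
      have hi'mem := (Finset.univ \ S).min'_mem hCne
      have hi'notS : i' ∉ S := (Finset.mem_sdiff.1 hi'mem).2
      have hxi' : x < x0 i' := by
        by_contra h
        push_neg at h
        exact hi'notS (Finset.mem_filter.2 ⟨Finset.mem_univ _, h⟩)
      have hIio : Finset.Iio i' ⊆ S := by
        intro j hj
        by_contra hjS
        have : i' ≤ j := (Finset.univ \ S).min'_le j (Finset.mem_sdiff.2 ⟨Finset.mem_univ _, hjS⟩)
        exact absurd (Finset.mem_Iio.1 hj) (not_lt.2 this)
      have h2 : ∑ j ∈ Finset.Iio i', m j ≤ ∑ i ∈ S, m i :=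
        Finset.sum_le_sum_of_subset_of_nonneg hIio (fun j _ _ => (hm j).le)
      have h3 : M0 x < θ i' := hB i' x hxi'
      have h4 : ∑ j ∈ Finset.Iic i', m j = m i' + ∑ j ∈ Finset.Iio i', m j := by
        rw [← Finset.Iio_insert, Finset.sum_insert (by simp)]
      rw [hθ i', h4] at h3
      have := hmc i'
      linarith
  have hout : ∀ x, x ∉ Icc (-R0) R0 → MN0 x = M0 x := by
    intro x hx
    rw [Set.mem_Icc, not_and_or, not_le, not_le] at hx
    rcases hx with hx | hx
    · have hS : Finset.univ.filter (fun i => x0 i ≤ x) = ∅ := by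
        apply Finset.filter_false_of_mem
        intro i _
        exact not_le.2 (lt_of_lt_of_le hx (hx0lb i))
      rw [hMN0' x, hS, Finset.sum_empty, hleft x hx.le, add_zero]
    · have hS : Finset.univ.filter (fun i => x0 i ≤ x) = Finset.univ := by
        apply Finset.filter_true_of_mem
        intro i _
        exact le_trans (hx0ub i) hx.le
      rw [hMN0' x, hS, hsum, hright x hx.le]
      norm_num
  have habs : ∀ x, |MN0 x - M0 x| ≤ (Icc (-R0) R0).indicator (fun _ => c) x := by
    intro x
    by_cases hx : x ∈ Icc (-R0) R0
    · rw [Set.indicator_of_mem hx, abs_le]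
      constructor
      · have := hdiff x; linarith
      · have := hle x; linarith
    · rw [Set.indicator_of_notMem hx, hout x hx, sub_self, abs_zero]
  have hint : Integrable ((Icc (-R0) R0).indicator (fun _ => c)) volume :=
    (integrableOn_const measure_Icc_lt_top.ne).integrable_indicator measurableSet_Icc
  calc (∫ x : ℝ, |MN0 x - M0 x|)
      ≤ ∫ x, (Icc (-R0) R0).indicator (fun _ => c) x :=
        integral_mono_of_nonneg (Filter.Eventually.of_forall fun x => abs_nonneg _) hint
          (Filter.Eventually.of_forall habs)
    _ = (volume (Icc (-R0) R0)).toReal • c := integral_indicator_const c measurableSet_Icc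
    _ = 2 * R0 * c := by
        rw [Real.volume_Icc, ENNReal.toReal_ofReal (by linarith), smul_eq_mul]
        ring
end

section
/- Let ρ⁰ be a compactly supported Borel probability measure on ℝ with diam(supp ρ⁰) = D⁰ > 0, and let M⁰(x) = ρ⁰((−∞,x]) − 1/2. Then for every N ≥ 1 there exist masses m_1,…,m_N > 0 with Σ m_i = 1 and points x_1⁰ ≤ … ≤ x_N⁰ such that, setting M_N⁰(x) = −1/2 + Σ_{i=1}^N m_i·1_{x ≥ x_i⁰}, one has both ‖M⁰ − M_N⁰‖_{L¹(ℝ)} ≤ D⁰/N and sup_{m ∈ (−1/2, 1/2]} |(M⁰)^{−1}(m) − (M_N⁰)^{−1}(m)| ≤ D⁰/N, where for a nondecreasing function G the generalized inverse is G^{−1}(m) = inf{x ∈ ℝ : G(x) ≥ m}. -/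
open MeasureTheory Set
open scoped Classical

/-- The topological support of a Borel measure on `ℝ`: the set of points all of whose
neighborhoods have positive measure. -/
def msupport (ρ : Measure ℝ) : Set ℝ := {x : ℝ | ∀ U ∈ nhds x, ρ U ≠ 0}

/-- The generalized inverse of a nondecreasing function: `G⁻¹(q) = inf{x : G(x) ≥ q}`. -/
noncomputable def genInv (G : ℝ → ℝ) (q : ℝ) : ℝ := sInf {x : ℝ | q ≤ G x}

lemma msupport_compl_open (ρ : Measure ℝ) : IsOpen (msupport ρ)ᶜ := by
  rw [isOpen_iff_mem_nhds]
  intro x hx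
  simp only [mem_compl_iff, msupport, mem_setOf_eq, not_forall] at hx
  obtain ⟨U, hU, hU0⟩ := hx
  obtain ⟨V, hVU, hVopen, hxV⟩ := mem_nhds_iff.1 hU
  filter_upwards [hVopen.mem_nhds hxV] with y hy
  simp only [mem_compl_iff, msupport, mem_setOf_eq, not_forall]
  exact ⟨V, hVopen.mem_nhds hy, by simpa using measure_mono_null hVU (by simpa using hU0)⟩

lemma msupport_compl_null (ρ : Measure ℝ) : ρ (msupport ρ)ᶜ = 0 := by
  have : ∀ x ∈ (msupport ρ)ᶜ, ∃ U : Set ℝ, IsOpen U ∧ x ∈ U ∧ ρ U = 0 := by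
    intro x hx
    simp only [mem_compl_iff, msupport, mem_setOf_eq, not_forall] at hx
    obtain ⟨U, hU, hU0⟩ := hx
    obtain ⟨V, hVU, hVopen, hxV⟩ := mem_nhds_iff.1 hU
    exact ⟨V, hVopen, hxV, measure_mono_null hVU (by simpa using hU0)⟩
  choose! U hUo hxU hU0 using this
  have hcov : (msupport ρ)ᶜ ⊆ ⋃₀ (U '' (msupport ρ)ᶜ) := fun x hx =>
    ⟨U x, mem_image_of_mem _ hx, hxU x hx⟩
  obtain ⟨T, hTc, hTsub, hTeq⟩ := TopologicalSpace.isOpen_sUnion_countable (U '' (msupport ρ)ᶜ)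
    (by rintro s ⟨x, hx, rfl⟩; exact hUo x hx)
  refine measure_mono_null (hTeq ▸ hcov) (measure_sUnion_null_iff hTc |>.2 ?_)
  intro s hs
  obtain ⟨x, hx, rfl⟩ := hTsub hs
  exact hU0 x hx

lemma redistribute {N : ℕ} (μ z : Fin N → ℝ)
    (hμ : ∀ i, 0 ≤ μ i) (hsum : ∑ i, μ i = 1) (hz : Monotone z) :
    ∃ m x0 : Fin N → ℝ, (∀ i, 0 < m i) ∧ Monotone x0 ∧
      ∀ g : ℝ → ℝ, ∑ i, m i * g (x0 i) = ∑ j, μ j * g (z j) := by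
  classical
  set S : Finset (Fin N) := Finset.univ.filter (fun j => 0 < μ j) with hS
  have hSne : S.Nonempty := by
    by_contra hne
    rw [Finset.not_nonempty_iff_eq_empty] at hne
    have : ∑ i, μ i = 0 := by
      refine Finset.sum_eq_zero fun i _ => ?_
      by_contra h0
      have : i ∈ S := by simp [hS, lt_of_le_of_ne (hμ i) (Ne.symm h0)]
      simp [hne] at this
    simp [this] at hsum
  set c : Fin N → Fin N := fun i =>
    if h : (S.filter (fun j => j ≤ i)).Nonempty then (S.filter (fun j => j ≤ i)).max' h
    else S.min' hSne with hc
  have hcS : ∀ i, c i ∈ S := by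
    intro i
    simp only [hc]
    split
    · next h => exact Finset.mem_of_mem_filter _ ((S.filter (fun j => j ≤ i)).max'_mem h)
    · exact S.min'_mem hSne
  have hcid : ∀ j ∈ S, c j = j := by
    intro j hj
    have hjj : j ∈ S.filter (fun j' => j' ≤ j) := by simp [hj]
    have hne : (S.filter (fun j' => j' ≤ j)).Nonempty := ⟨j, hjj⟩
    simp only [hc, dif_pos hne]
    refine le_antisymm ?_ (Finset.le_max' _ _ hjj)
    exact Finset.max'_le _ _ _ (fun y hy => (Finset.mem_filter.1 hy).2)
  have hcmono : Monotone c := by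
    intro i i' hii'
    simp only [hc]
    by_cases h1 : (S.filter (fun j => j ≤ i)).Nonempty
    · have h2 : (S.filter (fun j => j ≤ i')).Nonempty := by
        obtain ⟨x, hx⟩ := h1
        exact ⟨x, Finset.mem_filter.2 ⟨Finset.mem_of_mem_filter _ hx,
          le_trans (Finset.mem_filter.1 hx).2 hii'⟩⟩
      rw [dif_pos h1, dif_pos h2]
      refine Finset.max'_le _ _ _ fun y hy => Finset.le_max' _ _ ?_
      obtain ⟨hyS, hyi⟩ := Finset.mem_filter.1 hy
      exact Finset.mem_filter.2 ⟨hyS, le_trans hyi hii'⟩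
    · rw [dif_neg h1]
      split
      · next h2 => exact S.min'_le _ (Finset.mem_of_mem_filter _ ((S.filter _).max'_mem h2))
      · exact le_refl _
  set fib : Fin N → Finset (Fin N) := fun j => Finset.univ.filter (fun i => c i = j) with hfib
  have hfibcard : ∀ i, 0 < (fib (c i)).card := by
    intro i
    refine Finset.card_pos.2 ⟨i, ?_⟩
    simp [hfib]
  set m : Fin N → ℝ := fun i => μ (c i) / (fib (c i)).card with hm
  have hmpos : ∀ i, 0 < m i := by
    intro i
    have h1 : 0 < μ (c i) := by
      have := hcS i; rw [hS, Finset.mem_filter] at this; exact this.2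
    exact div_pos h1 (by exact_mod_cast hfibcard i)
  refine ⟨m, fun i => z (c i), hmpos, fun i j hij => hz (hcmono hij), ?_⟩
  intro g
  have key : ∀ w : Fin N → ℝ, ∑ i, m i * w (c i) = ∑ j, μ j * w j := by
    intro w
    rw [← Finset.sum_fiberwise_of_maps_to (g := c) (t := Finset.univ)
      (fun x _ => Finset.mem_univ (c x)) (fun i => m i * w (c i))]
    refine Finset.sum_congr rfl fun j _ => ?_
    by_cases hj : (fib j).Nonempty
    · have hcard : ((fib j).card : ℝ) ≠ 0 := by
        exact_mod_cast (Finset.card_pos.2 hj).ne'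
      have : ∀ i ∈ fib j, m i * w (c i) = (μ j / (fib j).card) * w j := by
        intro i hi
        have hci : c i = j := (Finset.mem_filter.1 hi).2
        simp [hm, hci]
      rw [show Finset.univ.filter (fun i => c i = j) = fib j from rfl,
        Finset.sum_congr rfl this, Finset.sum_const, nsmul_eq_mul]
      field_simp
    · have hj0 : μ j = 0 := by
        by_contra h0
        have hjS : j ∈ S := by simp [hS, lt_of_le_of_ne (hμ j) (Ne.symm h0)]
        exact hj ⟨j, by simp [hfib, hcid j hjS]⟩
      rw [Finset.not_nonempty_iff_eq_empty] at hj
      rw [show Finset.univ.filter (fun i => c i = j) = fib j from rfl, hj]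
      simp [hj0]
  exact key (fun j => g (z j))

lemma genInv_bounds (G : ℝ → ℝ) (q l u : ℝ) (hu : q ≤ G u) (hl : ∀ x, x < l → G x < q) :
    l ≤ genInv G q ∧ genInv G q ≤ u := by
  have hne : {x : ℝ | q ≤ G x}.Nonempty := ⟨u, hu⟩
  have hbdd : BddBelow {x : ℝ | q ≤ G x} :=
    ⟨l, fun x hx => le_of_not_gt fun h => (hl x h).not_ge hx⟩
  exact ⟨le_csInf hne fun x hx => le_of_not_gt fun h => (hl x h).not_ge hx, csInf_le hbdd hu⟩

/-- **well-prepared discretization.** Let `ρ⁰` be a compactly supported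
probability measure with `diam(supp ρ⁰) = D⁰ > 0` and cumulative function
`M⁰(x) = ρ⁰((−∞,x]) − 1/2`. For every `N ≥ 1` there are positive masses summing to one and
ordered points such that the step function `M_N⁰(x) = −1/2 + Σ_i m_i 1_{x ≥ x_i⁰}` satisfies
both `‖M⁰ − M_N⁰‖_{L¹} ≤ D⁰/N` and
`sup_{q ∈ (−1/2,1/2]} |(M⁰)⁻¹(q) − (M_N⁰)⁻¹(q)| ≤ D⁰/N`. -/
theorem wellprepared_discretization (ρ : Measure ℝ) [IsProbabilityMeasure ρ]
    (hcomp : IsCompact (msupport ρ))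
    (D0 : ℝ) (hD0 : D0 = Metric.diam (msupport ρ)) (hD0pos : 0 < D0)
    (M0 : ℝ → ℝ) (hM0 : ∀ x, M0 x = (ρ (Iic x)).toReal - 1/2)
    (N : ℕ) (hN : 0 < N) :
    ∃ m x0 : Fin N → ℝ,
      (∀ i, 0 < m i) ∧ (∑ i, m i = 1) ∧
      (∀ i j : Fin N, i ≤ j → x0 i ≤ x0 j) ∧
      (∫ x : ℝ,
          |M0 x - (-(1/2) + ∑ i, m i * (if x0 i ≤ x then (1:ℝ) else 0))|) ≤ D0 / N ∧
      ∀ q ∈ Ioc (-(1:ℝ)/2) (1/2),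
        |genInv M0 q
          - genInv (fun x => -(1/2) + ∑ i, m i * (if x0 i ≤ x then (1:ℝ) else 0)) q|
        ≤ D0 / N := by
  classical
  -- support basics
  have hKclosed : IsClosed (msupport ρ) := by
    rw [← compl_compl (msupport ρ)]; exact (msupport_compl_open ρ).isClosed_compl
  have hKnull : ρ (msupport ρ)ᶜ = 0 := msupport_compl_null ρ
  have hKne : (msupport ρ).Nonempty := by
    rcases eq_empty_or_nonempty (msupport ρ) with h | h
    · exfalso
      have h0 : ρ univ = 0 := by rw [← compl_empty, ← h]; exact hKnull
      rw [measure_univ] at h0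
      exact one_ne_zero h0
    · exact h
  set a := sInf (msupport ρ) with ha
  set b := sSup (msupport ρ) with hb
  have hbdd : Bornology.IsBounded (msupport ρ) := hcomp.isBounded
  have habD : b - a = D0 := by rw [hD0, Real.diam_eq hbdd]
  have hKab : msupport ρ ⊆ Icc a b := fun t ht =>
    ⟨csInf_le hbdd.bddBelow ht, le_csSup hbdd.bddAbove ht⟩
  have hIioa : ρ (Iio a) = 0 := by
    refine measure_mono_null (fun t ht => ?_) hKnull
    intro htK
    exact absurd (hKab htK).1 (not_le.2 ht)
  have hIoib : ρ (Ioi b) = 0 := by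
    refine measure_mono_null (fun t ht => ?_) hKnull
    intro htK
    exact absurd (hKab htK).2 (not_le.2 ht)
  set F : ℝ → ℝ := fun x => (ρ (Iic x)).toReal with hF
  have hFmono : Monotone F := fun x y hxy =>
    ENNReal.toReal_mono (measure_ne_top ρ _) (measure_mono (Iic_subset_Iic.2 hxy))
  have hF0 : ∀ x, 0 ≤ F x := fun x => ENNReal.toReal_nonneg
  have hFa : ∀ x, x < a → F x = 0 := by
    intro x hx
    have : ρ (Iic x) = 0 :=
      measure_mono_null (fun t (ht : t ≤ x) => lt_of_le_of_lt ht hx) hIioa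
    simp [hF, this]
  have hFb : ∀ x, b ≤ x → F x = 1 := by
    intro x hx
    have h1 : ρ (Iic x) + ρ (Ioi x) = 1 := by
      rw [← measure_univ (μ := ρ), ← compl_Iic]
      exact measure_add_measure_compl measurableSet_Iic
    have h2 : ρ (Ioi x) = 0 := measure_mono_null (Ioi_subset_Ioi hx) hIoib
    rw [h2, add_zero] at h1
    simp [hF, h1]
  -- grid
  have hNR : (0:ℝ) < N := by exact_mod_cast hN
  set δ := D0 / N with hδ
  have hh : 0 < δ := div_pos hD0pos hNR
  set y : ℕ → ℝ := fun i => a + i * δ with hy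
  have hy0 : y 0 = a := by simp [hy]
  have hysucc : ∀ i, y (i + 1) = y i + δ := by
    intro i; simp only [hy]; push_cast; ring
  have hymono : ∀ i j : ℕ, i ≤ j → y i ≤ y j := by
    intro i j hij
    simp only [hy]
    have : (i:ℝ) ≤ j := by exact_mod_cast hij
    nlinarith
  have hyN : y N = b := by
    have : (N:ℝ) * (D0 / N) = D0 := mul_div_cancel₀ D0 (ne_of_gt hNR)
    simp only [hy, hδ]
    rw [this]; linarith
  set G : ℕ → ℝ := fun i => if i = 0 then 0 else F (y i) with hG
  have hG0 : G 0 = 0 := by simp [hG]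
  have hGN : G N = 1 := by
    simp only [hG, if_neg hN.ne']
    rw [hyN]; exact hFb b le_rfl
  have hGF : ∀ i, G i ≤ F (y i) := by
    intro i
    by_cases hi : i = 0
    · subst hi; rw [hG0]; exact hF0 _
    · simp [hG, hi]
  have hGmono : Monotone G := by
    refine monotone_nat_of_le_succ fun i => ?_
    by_cases hi : i = 0
    · subst hi; rw [hG0]; exact le_trans (hF0 (y 1)) (by simp [hG])
    · simp only [hG, if_neg hi, if_neg (Nat.succ_ne_zero i)]
      exact hFmono (hymono i (i+1) (Nat.le_succ i))
  have hGFle : ∀ i x, y i ≤ x → G i ≤ F x := fun i x hx =>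
    le_trans (hGF i) (hFmono hx)
  have hFG : ∀ i x, x < y i → F x ≤ G i := by
    intro i x hx
    by_cases hi : i = 0
    · subst hi
      rw [hG0, hFa x (by rwa [hy0] at hx)]
    · simp only [hG, if_neg hi]
      exact hFmono hx.le
  set μn : ℕ → ℝ := fun i => G (i+1) - G i with hμn
  have hμn0 : ∀ i, 0 ≤ μn i := fun i => sub_nonneg.2 (hGmono (Nat.le_succ i))
  have htel : ∀ k, ∑ j ∈ Finset.range k, μn j = G k := by
    intro k
    simp only [hμn]
    rw [Finset.sum_range_sub G k, hG0, sub_zero]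
  set z : ℕ → ℝ := fun i => a + ((i:ℝ) + 1/2) * δ with hz
  have hzy : ∀ i, z i = y i + δ/2 := by
    intro i; simp only [hz, hy]; ring
  have hzy2 : ∀ i, z i = y (i+1) - δ/2 := by
    intro i; rw [hzy, hysucc]; ring
  clear_value a b F δ y G μn z
  have hzlt : ∀ j i : ℕ, j < i → z j < y i := by
    intro j i hji
    rw [hzy2]
    have := hymono (j+1) i hji
    linarith
  have hzgt : ∀ j i : ℕ, i ≤ j → y i < z j := by
    intro j i hij
    rw [hzy]
    have := hymono i j hij
    linarith
  set Φ : ℝ → ℝ := fun x => ∑ j ∈ Finset.range N, μn j * (if z j ≤ x then 1 else 0) with hΦ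
  have hterm0 : ∀ j x, 0 ≤ μn j * (if z j ≤ x then (1:ℝ) else 0) := by
    intro j x
    refine mul_nonneg (hμn0 j) ?_
    split <;> norm_num
  have htermle : ∀ j x, μn j * (if z j ≤ x then (1:ℝ) else 0) ≤ μn j := by
    intro j x
    split
    · simp
    · simpa using hμn0 j
  have hΦ0 : ∀ x, 0 ≤ Φ x := fun x => Finset.sum_nonneg fun j _ => hterm0 j x
  have hΦ1 : ∀ x, Φ x ≤ 1 := by
    intro x
    calc Φ x ≤ ∑ j ∈ Finset.range N, μn j := Finset.sum_le_sum fun j _ => htermle j x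
    _ = G N := htel N
    _ = 1 := hGN
  have hΦlow : ∀ i, i ≤ N → ∀ x, y i ≤ x → G i ≤ Φ x := by
    intro i hi x hx
    have h1 : ∑ j ∈ Finset.range i, μn j = ∑ j ∈ Finset.range i, μn j * (if z j ≤ x then 1 else 0) := by
      refine Finset.sum_congr rfl fun j hj => ?_
      rw [if_pos (le_trans (hzlt j i (Finset.mem_range.1 hj)).le hx), mul_one]
    calc G i = ∑ j ∈ Finset.range i, μn j := (htel i).symm
    _ = ∑ j ∈ Finset.range i, μn j * (if z j ≤ x then 1 else 0) := h1
    _ ≤ Φ x := Finset.sum_le_sum_of_subset_of_nonneg (Finset.range_subset_range.2 hi)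
        (fun j _ _ => hterm0 j x)
  have hΦhigh : ∀ i, i ≤ N → ∀ x, x < y i → Φ x ≤ G i := by
    intro i hi x hx
    have hfilter : (Finset.range N).filter (fun j => j < i) = Finset.range i := by
      ext j
      simp only [Finset.mem_filter, Finset.mem_range]
      omega
    calc Φ x ≤ ∑ j ∈ Finset.range N, (if j < i then μn j else 0) := by
          refine Finset.sum_le_sum fun j hj => ?_
          by_cases hji : j < i
          · rw [if_pos hji]; exact htermle j x
          · rw [if_neg hji]
            have hzx : ¬ z j ≤ x :=
              not_le.2 (lt_trans hx (hzgt j i (le_of_not_gt hji)))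
            rw [if_neg hzx, mul_zero]
    _ = ∑ j ∈ (Finset.range N).filter (fun j => j < i), μn j := (Finset.sum_filter _ _).symm
    _ = ∑ j ∈ Finset.range i, μn j := by rw [hfilter]
    _ = G i := htel i
  have hΦa : ∀ x, x < a → Φ x = 0 := by
    intro x hx
    refine le_antisymm ?_ (hΦ0 x)
    have := hΦhigh 0 (Nat.zero_le N) x (by rwa [hy0])
    rwa [hG0] at this
  have hΦb : ∀ x, b ≤ x → Φ x = 1 := by
    intro x hx
    refine le_antisymm (hΦ1 x) ?_
    have := hΦlow N le_rfl x (by rwa [hyN])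
    rwa [hGN] at this
  -- redistribute
  have hsumF : ∑ i : Fin N, μn i.val = 1 := by
    rw [Fin.sum_univ_eq_sum_range (fun i => μn i) N, htel N, hGN]
  have hzFmono : Monotone (fun i : Fin N => z i.val) := by
    intro i j hij
    simp only [hz]
    have h1 : (i.val : ℝ) ≤ j.val := by exact_mod_cast hij
    nlinarith
  obtain ⟨m, x0, hmpos, hx0mono, hkey⟩ :=
    redistribute (fun i : Fin N => μn i.val) (fun i : Fin N => z i.val)
      (fun i => hμn0 i.val) hsumF hzFmono
  have hstep : ∀ x, (∑ i, m i * (if x0 i ≤ x then (1:ℝ) else 0)) = Φ x := by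
    intro x
    have h1 := hkey (fun t => if t ≤ x then (1:ℝ) else 0)
    calc (∑ i, m i * (if x0 i ≤ x then (1:ℝ) else 0))
        = ∑ i, m i * (fun t => if t ≤ x then (1:ℝ) else 0) (x0 i) := rfl
    _ = ∑ j : Fin N, μn j.val * (fun t => if t ≤ x then (1:ℝ) else 0) (z j.val) := h1
    _ = ∑ j ∈ Finset.range N, μn j * (if z j ≤ x then 1 else 0) :=
        Fin.sum_univ_eq_sum_range (fun j => μn j * (if z j ≤ x then (1:ℝ) else 0)) N
    _ = Φ x := rfl
  clear_value Φ
  refine ⟨m, x0, hmpos, ?_, fun i j hij => hx0mono hij, ?_, ?_⟩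
  · have h1 := hkey (fun _ => 1)
    simpa [hsumF] using h1
  · -- L¹ bound
    have hint_eq : ∀ x : ℝ, |M0 x - (-(1/2) + ∑ i, m i * (if x0 i ≤ x then (1:ℝ) else 0))|
        = |F x - Φ x| := by
      intro x
      have hFx : F x = (ρ (Iic x)).toReal := by rw [hF]
      rw [hstep x, hM0 x, hFx]
      congr 1
      ring
    set gbd : ℝ → ℝ := fun x =>
      ∑ i ∈ Finset.range N, (Ico (y i) (y (i+1))).indicator (fun _ => μn i) x with hgbd
    have hind_int : ∀ i : ℕ, Integrable ((Ico (y i) (y (i+1))).indicator (fun _ => μn i)) := by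
      intro i
      rw [integrable_indicator_iff measurableSet_Ico]
      exact integrableOn_const measure_Ico_lt_top.ne
    have hgbd_int : Integrable gbd := by
      simp only [hgbd]
      exact integrable_finset_sum _ fun i _ => hind_int i
    have hgbd_nonneg : ∀ x, 0 ≤ gbd x := by
      intro x
      exact Finset.sum_nonneg fun i _ => indicator_nonneg (fun _ _ => hμn0 i) x
    have hvol : ∀ i : ℕ, (volume (Ico (y i) (y (i+1)))).toReal = δ := by
      intro i
      rw [Real.volume_Ico, hysucc i]
      rw [show y i + δ - y i = δ by ring, ENNReal.toReal_ofReal hh.le]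
    have hgbd_integral : ∫ x, gbd x = δ := by
      simp only [hgbd]
      rw [integral_finset_sum _ fun i _ => hind_int i]
      have : ∀ i ∈ Finset.range N, (∫ x, (Ico (y i) (y (i+1))).indicator (fun _ => μn i) x)
          = δ * μn i := by
        intro i _
        rw [integral_indicator_const (μn i) measurableSet_Ico, measureReal_def, hvol i, smul_eq_mul]
      rw [Finset.sum_congr rfl this, ← Finset.mul_sum, htel N, hGN, mul_one]
    have hfg : ∀ x, |F x - Φ x| ≤ gbd x := by
      intro x
      rcases lt_or_ge x a with hxa | hxa
      · rw [hFa x hxa, hΦa x hxa]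
        simpa using hgbd_nonneg x
      rcases le_or_gt b x with hbx | hbx
      · rw [hFb x hbx, hΦb x hbx]
        simpa using hgbd_nonneg x
      · have hxa0 : 0 ≤ (x - a) / δ := div_nonneg (by linarith) hh.le
        set i := Nat.floor ((x - a) / δ) with hi
        have h1 : (i:ℝ) ≤ (x - a) / δ := Nat.floor_le hxa0
        have h2 : (x - a) / δ < i + 1 := Nat.lt_floor_add_one _
        have hiN : i < N := by
          refine (Nat.floor_lt hxa0).2 ?_
          rw [div_lt_iff₀ hh]
          have hbb : a + (N:ℝ) * δ = b := by rw [← hyN]; simp [hy]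
          linarith
        have hyix : y i ≤ x := by
          simp only [hy]
          rw [le_div_iff₀ hh] at h1
          linarith
        have hxyi1 : x < y (i+1) := by
          simp only [hy]
          rw [div_lt_iff₀ hh] at h2
          push_cast
          linarith
        have hFl : G i ≤ F x := hGFle i x hyix
        have hFu : F x ≤ G (i+1) := hFG (i+1) x hxyi1
        have hPl : G i ≤ Φ x := hΦlow i hiN.le x hyix
        have hPu : Φ x ≤ G (i+1) := hΦhigh (i+1) hiN x hxyi1
        have habs : |F x - Φ x| ≤ μn i := by
          rw [abs_le]
          constructor
          · simp only [hμn]; linarith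
          · simp only [hμn]; linarith
        refine le_trans habs ?_
        have hmem : x ∈ Ico (y i) (y (i+1)) := ⟨hyix, hxyi1⟩
        have h6 : (Ico (y i) (y (i+1))).indicator (fun _ => μn i) x ≤ gbd x :=
          Finset.single_le_sum
            (f := fun j => (Ico (y j) (y (j+1))).indicator (fun _ => μn j) x)
            (fun j _ => indicator_nonneg (fun _ _ => hμn0 j) x) (Finset.mem_range.2 hiN)
        rwa [indicator_of_mem hmem] at h6
    calc (∫ x : ℝ, |M0 x - (-(1/2) + ∑ i, m i * (if x0 i ≤ x then (1:ℝ) else 0))|)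
        = ∫ x : ℝ, |F x - Φ x| := by
          refine integral_congr_ae (Filter.Eventually.of_forall fun x => ?_)
          exact hint_eq x
    _ ≤ ∫ x, gbd x := integral_mono_of_nonneg
          (Filter.Eventually.of_forall fun x => abs_nonneg _) hgbd_int
          (Filter.Eventually.of_forall hfg)
    _ = δ := hgbd_integral
  · -- inverse bound
    intro q hq
    obtain ⟨hq1, hq2⟩ := hq
    set q' := q + 1/2 with hq'
    have hq'0 : 0 < q' := by simp only [hq']; linarith
    have hq'1 : q' ≤ 1 := by simp only [hq']; linarith
    have hex : ∃ k, q' ≤ G k := ⟨N, by rw [hGN]; exact hq'1⟩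
    have hi_spec : q' ≤ G (Nat.find hex) := Nat.find_spec hex
    have hiN : Nat.find hex ≤ N := Nat.find_le (by rw [hGN]; exact hq'1)
    have hi0 : Nat.find hex ≠ 0 := by
      intro h0
      rw [h0, hG0] at hi_spec
      linarith
    obtain ⟨i', hi'⟩ : ∃ i', Nat.find hex = i' + 1 :=
      ⟨Nat.find hex - 1, (Nat.succ_pred_eq_of_pos (Nat.pos_of_ne_zero hi0)).symm⟩
    have hGi' : G i' < q' := by
      have hm : ¬ q' ≤ G i' := Nat.find_min hex (by omega)
      exact not_le.1 hm
    rw [hi'] at hi_spec hiN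
    have hbf : y i' ≤ genInv M0 q ∧ genInv M0 q ≤ y (i'+1) := by
      refine genInv_bounds M0 q (y i') (y (i'+1)) ?_ ?_
      · rw [hM0]
        have h3 : q' ≤ F (y (i'+1)) := le_trans hi_spec (hGF (i'+1))
        have hFx : F (y (i'+1)) = (ρ (Iic (y (i'+1)))).toReal := by rw [hF]
        simp only [hq'] at h3
        linarith
      · intro x hx
        rw [hM0]
        have h3 : F x ≤ G i' := hFG i' x hx
        have hFx : F x = (ρ (Iic x)).toReal := by rw [hF]
        have h4 : G i' < q + 1/2 := hq' ▸ hGi'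
        linarith
    have hbΦ : y i' ≤ genInv (fun x => -(1/2) + ∑ i, m i * (if x0 i ≤ x then (1:ℝ) else 0)) q ∧
        genInv (fun x => -(1/2) + ∑ i, m i * (if x0 i ≤ x then (1:ℝ) else 0)) q ≤ y (i'+1) := by
      refine genInv_bounds _ q (y i') (y (i'+1)) ?_ ?_
      · show q ≤ -(1/2) + ∑ i, m i * (if x0 i ≤ y (i'+1) then (1:ℝ) else 0)
        rw [hstep]
        have : q' ≤ Φ (y (i'+1)) := le_trans hi_spec (hΦlow (i'+1) hiN (y (i'+1)) le_rfl)
        simp only [hq'] at this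
        linarith
      · intro x hx
        show -(1/2) + ∑ i, m i * (if x0 i ≤ x then (1:ℝ) else 0) < q
        rw [hstep]
        have : Φ x ≤ G i' := hΦhigh i' (by omega) x hx
        simp only [hq'] at hGi'
        linarith
    have hyd : y (i'+1) = y i' + δ := hysucc i'
    rw [abs_le]
    constructor
    · have h1 := hbf.1; have h2 := hbΦ.2
      have hδ' : δ = D0 / N := hδ
      linarith
    · have h1 := hbf.2; have h2 := hbΦ.1
      have hδ' : δ = D0 / N := hδ
      linarith
end

section
/- (Fast alignment) Suppose (x_i, v_i)_{i=1}^N follows the sticky particle Cucker–Smale dynamics associated to masses (m_i)_{i=1}^N and protocol φ. Define D_N(t) = x_N(t) − x_1(t), V_N(t) = max_{1≤i≤N} v_i(t) − min_{1≤i≤N} v_i(t), and Φ(x) = ∫_0^x φ(y)dy. Assume sup_{R>0} Φ(R) > E⁰ := Φ(D_N(0)) + V_N(0), and set D̄ := inf{R ≥ 0 : Φ(R) ≥ E⁰}. Then for all t ≥ 0, V_N(t) ≤ V_N(0)·exp(−φ(D̄)·t). -/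
open MeasureTheory Set Filter
open scoped Classical

open scoped Topology

section AuxLemmas

variable {φ : ℝ → ℝ}

lemma Phi_mono (hint : ∀ a b : ℝ, IntervalIntegrable φ volume a b)
    (hpos : ∀ z, 0 ≤ φ z) : Monotone (Phi φ) := by
  intro a b hab
  have : Phi φ b - Phi φ a = ∫ y in a..b, φ y := by
    rw [Phi, Phi, ← intervalIntegral.integral_add_adjacent_intervals (hint 0 a) (hint a b)]
    ring
  have hnn : 0 ≤ ∫ y in a..b, φ y :=
    intervalIntegral.integral_nonneg hab (fun u _ => hpos u)
  linarith [this]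

lemma Phi_cont (hint : ∀ a b : ℝ, IntervalIntegrable φ volume a b) :
    Continuous (Phi φ) :=
  intervalIntegral.continuous_primitive hint 0

lemma Phi_hasDeriv (hint : ∀ a b : ℝ, IntervalIntegrable φ volume a b)
    (hcont : ContinuousOn φ {(0:ℝ)}ᶜ) {z : ℝ} (hz : z ≠ 0) :
    HasDerivAt (Phi φ) (φ z) z := by
  have hzmem : z ∈ ({(0:ℝ)}ᶜ : Set ℝ) := by simpa using hz
  exact intervalIntegral.integral_hasDerivAt_right (hint 0 z)
    (hcont.stronglyMeasurableAtFilter isOpen_compl_singleton z hzmem)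
    (hcont.continuousAt (isOpen_compl_singleton.mem_nhds hzmem))

lemma tendsto_finset_sup' {ι α : Type*} (s : Finset ι) (hs : s.Nonempty)
    (f : ι → α → ℝ) (l : Filter α) (g : ι → ℝ)
    (hf : ∀ i, Tendsto (f i) l (𝓝 (g i))) :
    Tendsto (fun t => s.sup' hs (fun i => f i t)) l (𝓝 (s.sup' hs g)) := by
  induction hs using Finset.Nonempty.cons_induction with
  | singleton a => simpa using hf a
  | cons a s ha hs ih =>
      simp only [Finset.sup'_cons (H := hs)]
      exact (hf a).max ih

lemma tendsto_finset_inf' {ι α : Type*} (s : Finset ι) (hs : s.Nonempty)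
    (f : ι → α → ℝ) (l : Filter α) (g : ι → ℝ)
    (hf : ∀ i, Tendsto (f i) l (𝓝 (g i))) :
    Tendsto (fun t => s.inf' hs (fun i => f i t)) l (𝓝 (s.inf' hs g)) := by
  induction hs using Finset.Nonempty.cons_induction with
  | singleton a => simpa using hf a
  | cons a s ha hs ih =>
      simp only [Finset.inf'_cons (H := hs)]
      exact (hf a).min ih

/-- Grönwall-type chaining lemma across a finite set of (jump) times. -/
lemma chain_bound {C : Set ℝ} (hC : C.Finite) (hC0 : C ⊆ Ioi 0)
    (f : ℝ → ℝ) (A K : ℝ) (t : ℝ)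
    (h0 : f 0 ≤ A)
    (hrc : ∀ s, 0 ≤ s → s ≤ t → ContinuousWithinAt f (Ici s) s)
    (hcont : ∀ s, 0 < s → s ≤ t → s ∉ C → ContinuousAt f s)
    (hdini : ∀ s, 0 ≤ s → s < t → s ∉ C → ∀ r, K * f s < r →
        ∀ᶠ z in 𝓝[>] s, f z - f s < r * (z - s))
    (hjump : ∀ τ, τ ∈ C → τ ≤ t → ∃ L, Tendsto f (𝓝[<] τ) (𝓝 L) ∧ f τ ≤ L) :
    ∀ s, 0 ≤ s → s ≤ t → f s ≤ A * Real.exp (K * s) := by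
  -- Gronwall on an interval with no jump points in (a, b], a itself not a jump point
  have gron : ∀ a b : ℝ, 0 ≤ a → a ≤ b → b ≤ t → (∀ u, u ∈ Ioc a b → u ∉ C) → a ∉ C →
      f b ≤ f a * Real.exp (K * (b - a)) := by
    intro a b ha hab hbt hIoc haC
    have hfc : ContinuousOn f (Icc a b) := by
      intro u hu
      by_cases hau : a = u
      · subst hau
        exact ((hrc a ha (le_trans hab hbt)).mono (Icc_subset_Ici_self))
      · have hau' : a < u := lt_of_le_of_ne hu.1 hau
        exact (hcont u (lt_of_le_of_lt ha hau') (le_trans hu.2 hbt)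
          (hIoc u ⟨hau', hu.2⟩)).continuousWithinAt
    have key := le_gronwallBound_of_liminf_deriv_right_le (f' := fun s => K * f s)
      (δ := f a) (K := K) (ε := 0) (a := a) (b := b) hfc
      (fun u hu r hr => by
        have hu0 : 0 ≤ u := le_trans ha hu.1
        have huC : u ∉ C := by
          by_cases hau : a = u
          · subst hau; exact haC
          · exact hIoc u ⟨lt_of_le_of_ne hu.1 hau, hu.2.le⟩
        have hev := hdini u hu0 (lt_of_lt_of_le hu.2 hbt) huC r hr
        refine (Filter.Eventually.frequently ?_)
        filter_upwards [hev, self_mem_nhdsWithin] with z hz hz'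
        have hzpos : 0 < z - u := sub_pos.2 hz'
        rw [inv_mul_lt_iff₀ hzpos]
        linarith [hz])
      le_rfl
      (fun u _ => by simp)
    have := key b ⟨hab, le_refl b⟩
    rwa [gronwallBound_ε0] at this
  -- allow a ∈ C, using right continuity at a
  have gron2 : ∀ a b : ℝ, 0 ≤ a → a ≤ b → b ≤ t → (∀ u, u ∈ Ioc a b → u ∉ C) →
      f b ≤ f a * Real.exp (K * (b - a)) := by
    intro a b ha hab hbt hIoc
    by_cases haC : a ∈ C
    · rcases eq_or_lt_of_le hab with rfl | hab'
      · simp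
      · -- approximate from the right
        have hbound : ∀ a' ∈ Ioo a b, f b ≤ f a' * Real.exp (K * (b - a')) := by
          intro a' ha'
          exact gron a' b (le_trans ha ha'.1.le) ha'.2.le hbt
            (fun u hu => hIoc u ⟨lt_trans ha'.1 hu.1, hu.2⟩)
            (hIoc a' ⟨ha'.1, ha'.2.le⟩)
        have htend : Tendsto (fun a' => f a' * Real.exp (K * (b - a')))
            (𝓝[>] a) (𝓝 (f a * Real.exp (K * (b - a)))) := by
          have h1 : Tendsto f (𝓝[>] a) (𝓝 (f a)) :=
            (hrc a ha (le_trans hab hbt)).mono_left (nhdsWithin_mono a Ioi_subset_Ici_self)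
          have h2 : Tendsto (fun a' => Real.exp (K * (b - a'))) (𝓝[>] a)
              (𝓝 (Real.exp (K * (b - a)))) := by
            have : Continuous (fun a' : ℝ => Real.exp (K * (b - a'))) :=
              Real.continuous_exp.comp (continuous_const.mul (continuous_const.sub continuous_id))
            exact (this.tendsto a).mono_left nhdsWithin_le_nhds
          exact h1.mul h2
        refine ge_of_tendsto htend ?_
        filter_upwards [Ioo_mem_nhdsGT_of_mem (show a ∈ Ico a b from ⟨le_refl a, hab'⟩)]
          with a' ha' using hbound a' ha'
    · exact gron a b ha hab hbt hIoc haC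
  -- main induction on the number of jump points
  have main : ∀ n : ℕ, ∀ s, 0 ≤ s → s ≤ t → (C ∩ Ioc 0 s).ncard ≤ n →
      f s ≤ A * Real.exp (K * s) := by
    intro n
    induction n with
    | zero =>
        intro s hs hst hcard
        have hfin : (C ∩ Ioc 0 s).Finite := hC.subset inter_subset_left
        have hempty : C ∩ Ioc 0 s = ∅ := (Set.ncard_eq_zero hfin).1 (Nat.le_zero.1 hcard)
        have h2 := gron2 0 s le_rfl hs hst (fun u hu huC => by
          have : u ∈ C ∩ Ioc 0 s := ⟨huC, hu⟩
          rw [hempty] at this; exact this)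
        calc f s ≤ f 0 * Real.exp (K * (s - 0)) := h2
          _ ≤ A * Real.exp (K * s) := by
              rw [sub_zero]
              exact mul_le_mul_of_nonneg_right h0 (Real.exp_pos _).le
    | succ n ih =>
        intro s hs hst hcard
        have hfin : (C ∩ Ioc 0 s).Finite := hC.subset inter_subset_left
        by_cases hne : (C ∩ Ioc 0 s) = ∅
        · have h2 := gron2 0 s le_rfl hs hst (fun u hu huC => by
            have : u ∈ C ∩ Ioc 0 s := ⟨huC, hu⟩
            rw [hne] at this; exact this)
          calc f s ≤ f 0 * Real.exp (K * (s - 0)) := h2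
            _ ≤ A * Real.exp (K * s) := by
                rw [sub_zero]
                exact mul_le_mul_of_nonneg_right h0 (Real.exp_pos _).le
        · have hfne : hfin.toFinset.Nonempty := by
            rw [Set.Finite.toFinset_nonempty]
            exact Set.nonempty_iff_ne_empty.2 hne
          set τ := hfin.toFinset.max' hfne with hτdef
          have hτmem : τ ∈ C ∩ Ioc 0 s := by
            have := hfin.toFinset.max'_mem hfne
            rwa [Set.Finite.mem_toFinset] at this
          have hτmax : ∀ u ∈ C ∩ Ioc 0 s, u ≤ τ := by
            intro u hu
            exact hfin.toFinset.le_max' u (by rwa [Set.Finite.mem_toFinset])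
          have hτ0 : 0 < τ := hτmem.2.1
          have hτs : τ ≤ s := hτmem.2.2
          -- bound strictly before τ
          have hbefore : ∀ u, 0 ≤ u → u < τ → f u ≤ A * Real.exp (K * u) := by
            intro u hu huτ
            apply ih u hu (le_trans (le_trans huτ.le hτs) hst)
            have hsub : C ∩ Ioc 0 u ⊆ (C ∩ Ioc 0 s) \ {τ} := by
              intro w hw
              refine ⟨⟨hw.1, hw.2.1, le_trans hw.2.2 (le_trans huτ.le hτs)⟩, ?_⟩
              simp only [mem_singleton_iff]
              intro hwτ
              exact absurd (lt_of_le_of_lt hw.2.2 huτ) (by rw [hwτ]; exact lt_irrefl τ)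
            calc (C ∩ Ioc 0 u).ncard ≤ ((C ∩ Ioc 0 s) \ {τ}).ncard :=
                  Set.ncard_le_ncard hsub (hfin.subset diff_subset)
              _ = (C ∩ Ioc 0 s).ncard - 1 := Set.ncard_diff_singleton_of_mem hτmem
              _ ≤ n := by omega
          -- bound at τ using the jump hypothesis
          have hatτ : f τ ≤ A * Real.exp (K * τ) := by
            obtain ⟨L, hLt, hfτL⟩ := hjump τ hτmem.1 (le_trans hτs hst)
            refine le_trans hfτL ?_
            have hbt : Tendsto (fun u => A * Real.exp (K * u)) (𝓝[<] τ)
                (𝓝 (A * Real.exp (K * τ))) := by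
              have : Continuous (fun u : ℝ => A * Real.exp (K * u)) :=
                continuous_const.mul (Real.continuous_exp.comp (continuous_const.mul continuous_id))
              exact (this.tendsto τ).mono_left nhdsWithin_le_nhds
            refine le_of_tendsto_of_tendsto hLt hbt ?_
            filter_upwards [Ioo_mem_nhdsLT_of_mem (show τ ∈ Ioc 0 τ from ⟨hτ0, le_refl τ⟩)]
              with u hu using hbefore u hu.1.le hu.2
          -- extend from τ to s
          have hlast := gron2 τ s hτ0.le hτs hst (fun u hu huC => by
            have := hτmax u ⟨huC, lt_trans hτ0 hu.1, hu.2⟩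
            exact absurd hu.1 (not_lt.2 this))
          calc f s ≤ f τ * Real.exp (K * (s - τ)) := hlast
            _ ≤ (A * Real.exp (K * τ)) * Real.exp (K * (s - τ)) :=
                mul_le_mul_of_nonneg_right hatτ (Real.exp_pos _).le
            _ = A * Real.exp (K * s) := by
                rw [mul_assoc, ← Real.exp_add]; ring_nf
  intro s hs hst
  exact main (C ∩ Ioc 0 s).ncard s hs hst le_rfl

end AuxLemmas

section Sticky

variable {N : ℕ} {m : Fin N → ℝ} {φ : ℝ → ℝ} {C : Set ℝ} {x v : Fin N → ℝ → ℝ}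

lemma StickyCS.v_eq (h : StickyCS N m φ C x v) {i j : Fin N} {t : ℝ} (ht : 0 ≤ t)
    (hx : x i t = x j t) : v i t = v j t := by
  by_cases htC : t ∈ C
  · rw [h.collide t htC i, h.collide t htC j, hx]
  · have hsub : Ici t ⊆ Ici (0:ℝ) := Ici_subset_Ici.2 ht
    have heq : EqOn (x j) (x i) (Ici t) := fun s hs => (h.sticky i j t s ht hs hx).symm
    have h1 : HasDerivWithinAt (x i) (v i t) (Ici t) t := (h.x_deriv i t ⟨ht, htC⟩).mono hsub
    have h2 : HasDerivWithinAt (x j) (v i t) (Ici t) t := h1.congr heq (heq Set.self_mem_Ici)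
    have h3 : HasDerivWithinAt (x j) (v j t) (Ici t) t := (h.x_deriv j t ⟨ht, htC⟩).mono hsub
    exact UniqueDiffWithinAt.eq_deriv (Ici t) ((uniqueDiffOn_Ici t) t Set.self_mem_Ici) h2 h3

lemma StickyCS.dini_V (h : StickyCS N m φ C x v) (hN : 0 < N)
    (D V : ℝ → ℝ)
    (hD : ∀ t, D t = x ⟨N - 1, Nat.sub_lt hN Nat.one_pos⟩ t - x ⟨0, hN⟩ t)
    (hV : ∀ t, V t = Finset.univ.sup' ⟨⟨0, hN⟩, Finset.mem_univ _⟩ (fun i => v i t)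
        - Finset.univ.inf' ⟨⟨0, hN⟩, Finset.mem_univ _⟩ (fun i => v i t))
    {t : ℝ} (ht : 0 ≤ t) (htC : t ∉ C) :
    ∀ r, -(φ (D t) * V t) < r → ∀ᶠ z in 𝓝[>] t, V z - V t < r * (z - t) := by
  intro r hr
  have hne : (Finset.univ : Finset (Fin N)).Nonempty := ⟨⟨0, hN⟩, Finset.mem_univ _⟩
  set I : Fin N := ⟨0, hN⟩ with hIdef
  set J : Fin N := ⟨N - 1, Nat.sub_lt hN Nat.one_pos⟩ with hJdef
  set M : ℝ := Finset.univ.sup' hne (fun i => v i t) with hMdef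
  set μ : ℝ := Finset.univ.inf' hne (fun i => v i t) with hμdef
  have hVt : V t = M - μ := hV t
  set P : ℝ := ∑ j, m j * v j t with hPdef
  have hvleM : ∀ p : Fin N, v p t ≤ M := by
    intro p; rw [hMdef]; exact Finset.le_sup' (fun i => v i t) (Finset.mem_univ p)
  have hμlev : ∀ p : Fin N, μ ≤ v p t := by
    intro p; rw [hμdef]; exact Finset.inf'_le (fun i => v i t) (Finset.mem_univ p)
  have hxb : ∀ q : Fin N, x I t ≤ x q t ∧ x q t ≤ x J t := by
    intro q
    constructor
    · exact h.x_ord I q (by simp [hIdef, Fin.le_def]) t ht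
    · refine h.x_ord q J ?_ t ht
      rw [Fin.le_def]
      have := q.isLt
      simp only [hJdef]
      omega
  have hDt : D t = x J t - x I t := hD t
  -- the key per-term coefficient bound
  have hcoeff : ∀ p j : Fin N, x j t ≠ x p t → φ (D t) ≤ φ (x j t - x p t) := by
    intro p j hjne
    have habs : |x j t - x p t| ≤ D t := by
      rw [abs_le]
      constructor <;> [skip; skip] <;>
        (obtain ⟨hj1, hj2⟩ := hxb j; obtain ⟨hp1, hp2⟩ := hxb p; rw [hDt]) <;> linarith
    have habs0 : 0 < |x j t - x p t| := abs_pos.2 (sub_ne_zero.2 hjne)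
    have hφeq : φ (x j t - x p t) = φ |x j t - x p t| := by
      rcases abs_cases (x j t - x p t) with ⟨he, _⟩ | ⟨he, _⟩
      · rw [he]
      · rw [← h.φ_even]
        congr 1
        linarith
    rw [hφeq]
    exact h.φ_anti habs0 (lt_of_lt_of_le habs0 habs) habs
  have claimA : ∀ p : Fin N, v p t = M →
      (∑ j ∈ Finset.univ.filter (fun j => x j t ≠ x p t),
        m j * φ (x j t - x p t) * (v j t - v p t)) ≤ φ (D t) * (P - v p t) := by
    intro p hp
    have step1 : (∑ j ∈ Finset.univ.filter (fun j => x j t ≠ x p t),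
        m j * φ (x j t - x p t) * (v j t - v p t)) ≤
        ∑ j ∈ Finset.univ.filter (fun j => x j t ≠ x p t),
        m j * φ (D t) * (v j t - v p t) := by
      apply Finset.sum_le_sum
      intro j hj
      have hjne : x j t ≠ x p t := (Finset.mem_filter.1 hj).2
      have hφge := hcoeff p j hjne
      have hvle : v j t - v p t ≤ 0 := by
        have := hvleM j; rw [hp]; linarith
      have hmul : φ (x j t - x p t) * (v j t - v p t) ≤ φ (D t) * (v j t - v p t) :=
        mul_le_mul_of_nonpos_right hφge hvle
      calc m j * φ (x j t - x p t) * (v j t - v p t)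
          = m j * (φ (x j t - x p t) * (v j t - v p t)) := by ring
        _ ≤ m j * (φ (D t) * (v j t - v p t)) :=
            mul_le_mul_of_nonneg_left hmul (h.m_pos j).le
        _ = m j * φ (D t) * (v j t - v p t) := by ring
    have step2 : (∑ j ∈ Finset.univ.filter (fun j => x j t ≠ x p t),
        m j * φ (D t) * (v j t - v p t)) = ∑ j, m j * φ (D t) * (v j t - v p t) := by
      apply Finset.sum_subset (Finset.filter_subset _ _)
      intro j _ hj
      have hxeq : x j t = x p t := by
        by_contra hcon
        exact hj (Finset.mem_filter.2 ⟨Finset.mem_univ j, hcon⟩)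
      have hveq := h.v_eq ht hxeq
      rw [hveq]; ring
    have step3 : (∑ j, m j * φ (D t) * (v j t - v p t)) = φ (D t) * (P - v p t) := by
      have e1 : ∀ j : Fin N, m j * φ (D t) * (v j t - v p t)
          = φ (D t) * (m j * v j t) - φ (D t) * (m j * v p t) := fun j => by ring
      rw [Finset.sum_congr rfl (fun j _ => e1 j), Finset.sum_sub_distrib,
        ← Finset.mul_sum, ← Finset.mul_sum, hPdef]
      have e2 : (∑ j, m j * v p t) = (∑ j, m j) * v p t := by
        rw [Finset.sum_mul]
      rw [e2, h.m_sum]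
      ring
    linarith [step1, step2.le, step3.le]
  have claimB : ∀ q : Fin N, v q t = μ →
      φ (D t) * (P - v q t) ≤ (∑ j ∈ Finset.univ.filter (fun j => x j t ≠ x q t),
        m j * φ (x j t - x q t) * (v j t - v q t)) := by
    intro q hq
    have step1 : (∑ j ∈ Finset.univ.filter (fun j => x j t ≠ x q t),
        m j * φ (D t) * (v j t - v q t)) ≤
        ∑ j ∈ Finset.univ.filter (fun j => x j t ≠ x q t),
        m j * φ (x j t - x q t) * (v j t - v q t) := by
      apply Finset.sum_le_sum
      intro j hj
      have hjne : x j t ≠ x q t := (Finset.mem_filter.1 hj).2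
      have hφge := hcoeff q j hjne
      have hvge : 0 ≤ v j t - v q t := by
        have := hμlev j; rw [hq]; linarith
      have hmul : φ (D t) * (v j t - v q t) ≤ φ (x j t - x q t) * (v j t - v q t) :=
        mul_le_mul_of_nonneg_right hφge hvge
      calc m j * φ (D t) * (v j t - v q t)
          = m j * (φ (D t) * (v j t - v q t)) := by ring
        _ ≤ m j * (φ (x j t - x q t) * (v j t - v q t)) :=
            mul_le_mul_of_nonneg_left hmul (h.m_pos j).le
        _ = m j * φ (x j t - x q t) * (v j t - v q t) := by ring
    have step2 : (∑ j ∈ Finset.univ.filter (fun j => x j t ≠ x q t),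
        m j * φ (D t) * (v j t - v q t)) = ∑ j, m j * φ (D t) * (v j t - v q t) := by
      apply Finset.sum_subset (Finset.filter_subset _ _)
      intro j _ hj
      have hxeq : x j t = x q t := by
        by_contra hcon
        exact hj (Finset.mem_filter.2 ⟨Finset.mem_univ j, hcon⟩)
      have hveq := h.v_eq ht hxeq
      rw [hveq]; ring
    have step3 : (∑ j, m j * φ (D t) * (v j t - v q t)) = φ (D t) * (P - v q t) := by
      have e1 : ∀ j : Fin N, m j * φ (D t) * (v j t - v q t)
          = φ (D t) * (m j * v j t) - φ (D t) * (m j * v q t) := fun j => by ring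
      rw [Finset.sum_congr rfl (fun j _ => e1 j), Finset.sum_sub_distrib,
        ← Finset.mul_sum, ← Finset.mul_sum, hPdef]
      have e2 : (∑ j, m j * v q t) = (∑ j, m j) * v q t := by
        rw [Finset.sum_mul]
      rw [e2, h.m_sum]
      ring
    linarith [step1, step2.le, step3.le]
  -- per-pair eventual bound
  have pair : ∀ pq : Fin N × Fin N, ∀ᶠ z in 𝓝[>] t,
      v pq.1 z - v pq.2 z - V t < r * (z - t) := by
    rintro ⟨p, q⟩
    by_cases hpq : v p t - v q t = V t
    · have hpM : v p t = M := by
        have h1 := hvleM p; have h2 := hμlev q; rw [hVt] at hpq; linarith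
      have hqμ : v q t = μ := by
        have h1 := hvleM p; have h2 := hμlev q; rw [hVt] at hpq; linarith
      have hd1 := h.v_deriv p t ⟨ht, htC⟩
      have hd2 := h.v_deriv q t ⟨ht, htC⟩
      have hsubd : HasDerivWithinAt (fun s => v p s - v q s)
          ((∑ j ∈ Finset.univ.filter (fun j => x j t ≠ x p t),
            m j * φ (x j t - x p t) * (v j t - v p t)) -
           (∑ j ∈ Finset.univ.filter (fun j => x j t ≠ x q t),
            m j * φ (x j t - x q t) * (v j t - v q t))) (Ici t) t :=
        (hd1.sub hd2).mono (Ici_subset_Ici.2 ht)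
      have hdle : ((∑ j ∈ Finset.univ.filter (fun j => x j t ≠ x p t),
            m j * φ (x j t - x p t) * (v j t - v p t)) -
           (∑ j ∈ Finset.univ.filter (fun j => x j t ≠ x q t),
            m j * φ (x j t - x q t) * (v j t - v q t))) < r := by
        have hA := claimA p hpM
        have hB := claimB q hqμ
        have hVeq : V t = v p t - v q t := hpq.symm
        have : φ (D t) * (P - v p t) - φ (D t) * (P - v q t) = -(φ (D t) * V t) := by
          rw [hVeq]; ring
        linarith
      have hslope := hasDerivWithinAt_iff_tendsto_slope.1 hsubd
      have hIoi : (Ici t \ {t} : Set ℝ) = Ioi t := Ici_sdiff_left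
      rw [hIoi] at hslope
      have hev := hslope.eventually_lt_const hdle
      filter_upwards [hev, self_mem_nhdsWithin] with z hz hz'
      have hzt : 0 < z - t := sub_pos.2 hz'
      rw [slope_def_field] at hz
      have hdiff : (v p z - v q z) - (v p t - v q t) < r * (z - t) := by
        rw [div_lt_iff₀ hzt] at hz
        linarith
      rw [← hpq]
      linarith
    · have hlt : v p t - v q t < V t := by
        refine lt_of_le_of_ne ?_ hpq
        have h1 := hvleM p; have h2 := hμlev q; rw [hVt]; linarith
      have h1 : Tendsto (fun z => v p z - v q z) (𝓝[>] t) (𝓝 (v p t - v q t)) := by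
        have hp := (h.v_rc p t ht).mono_left (nhdsWithin_mono t Ioi_subset_Ici_self)
        have hq := (h.v_rc q t ht).mono_left (nhdsWithin_mono t Ioi_subset_Ici_self)
        exact hp.sub hq
      have hev1 := h1.eventually_lt_const
        (show v p t - v q t < (v p t - v q t + V t)/2 by linarith)
      have h2 : Tendsto (fun z => r * (z - t)) (𝓝[>] t) (𝓝 0) := by
        have : Continuous (fun z : ℝ => r * (z - t)) :=
          continuous_const.mul (continuous_id.sub continuous_const)
        have h3 := (this.tendsto t).mono_left (nhdsWithin_le_nhds (s := Ioi t))
        simpa using h3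
      have hev2 := h2.eventually_const_lt
        (show (v p t - v q t + V t)/2 - V t < 0 by linarith)
      filter_upwards [hev1, hev2] with z hz1 hz2
      linarith
  have hall : ∀ᶠ z in 𝓝[>] t, ∀ pq : Fin N × Fin N,
      v pq.1 z - v pq.2 z - V t < r * (z - t) := eventually_all.2 pair
  filter_upwards [hall] with z hz
  obtain ⟨p, _, hp⟩ := Finset.exists_mem_eq_sup' hne (fun i => v i z)
  obtain ⟨q, _, hq⟩ := Finset.exists_mem_eq_inf' hne (fun i => v i z)
  have hzz := hz (p, q)
  rw [hV z, hp, hq]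
  simpa using hzz

lemma StickyCS.left_tendsto (h : StickyCS N m φ C x v) {τ : ℝ} (hτ : τ ∈ C) :
    ∃ L : Fin N → ℝ, ∀ j : Fin N, Tendsto (v j) (𝓝[<] τ) (𝓝 (L j)) := by
  have hτ0 : 0 < τ := h.C_pos hτ
  classical
  let g : Fin N × Fin N → ℝ := fun p =>
    if hp : ∃ s, 0 ≤ s ∧ s < τ ∧ x p.1 s = x p.2 s then hp.choose else 0
  have hCfin : (C ∩ Iio τ).Finite := h.C_fin.subset inter_subset_left
  let F : Finset ℝ := insert 0 (hCfin.toFinset ∪ Finset.image g Finset.univ)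
  have hF0 : (0:ℝ) ∈ F := Finset.mem_insert_self _ _
  have hFne : F.Nonempty := ⟨0, hF0⟩
  set a := F.max' hFne with hadef
  have hFlt : ∀ y ∈ F, y < τ := by
    intro y hy
    rcases Finset.mem_insert.1 hy with rfl | hy'
    · exact hτ0
    rcases Finset.mem_union.1 hy' with hy1 | hy2
    · exact (hCfin.mem_toFinset.1 hy1).2
    · obtain ⟨p, _, hpy⟩ := Finset.mem_image.1 hy2
      by_cases hp : ∃ s, 0 ≤ s ∧ s < τ ∧ x p.1 s = x p.2 s
      · rw [← hpy]; simp only [g, dif_pos hp]; exact hp.choose_spec.2.1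
      · rw [← hpy]; simp only [g, dif_neg hp]; exact hτ0
  have haτ : a < τ := hFlt a (F.max'_mem hFne)
  have ha0 : 0 ≤ a := F.le_max' 0 hF0
  have key1 : ∀ u ∈ Ioo a τ, u ∉ C := by
    intro u hu huC
    have hmem : u ∈ F := Finset.mem_insert_of_mem
      (Finset.mem_union_left _ (hCfin.mem_toFinset.2 ⟨huC, hu.2⟩))
    exact absurd hu.1 (not_lt.2 (F.le_max' u hmem))
  have key2 : ∀ i j : Fin N, ∀ u, 0 ≤ u → u < τ → x i u = x j u →
      ∀ w ∈ Ioo a τ, x i w = x j w := by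
    intro i j u hu0 huτ hxu w hw
    have hp : ∃ s, 0 ≤ s ∧ s < τ ∧ x i s = x j s := ⟨u, hu0, huτ, hxu⟩
    have hs0 := hp.choose_spec
    have hga : g (i, j) ≤ a := F.le_max' _ (Finset.mem_insert_of_mem
      (Finset.mem_union_right _ (Finset.mem_image_of_mem g (Finset.mem_univ (i,j)))))
    have hgval : g (i, j) = hp.choose := dif_pos hp
    exact h.sticky i j hp.choose w hs0.1 (le_trans (hgval ▸ hga) hw.1.le) hs0.2.2
  suffices main : ∀ j : Fin N, ∃ Lj, Tendsto (v j) (𝓝[<] τ) (𝓝 Lj) by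
    choose L hL using main
    exact ⟨L, hL⟩
  intro j
  set t₀ := (a + τ)/2 with ht₀def
  have ht₀ : t₀ ∈ Ioo a τ := ⟨by simp only [ht₀def]; linarith, by simp only [ht₀def]; linarith⟩
  set G : Finset (Fin N) := Finset.univ.filter (fun i => x i t₀ = x j t₀) with hGdef
  have hjG : j ∈ G := by simp [hGdef]
  have hGiff : ∀ u ∈ Ioo a τ, ∀ i : Fin N, (i ∈ G ↔ x i u = x j u) := by
    intro u hu i
    constructor
    · intro hiG
      have hxi : x i t₀ = x j t₀ := by
        have := Finset.mem_filter.1 (hGdef ▸ hiG)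
        exact this.2
      exact key2 i j t₀ (by linarith [ht₀.1]) ht₀.2 hxi u hu
    · intro hxu
      have hxt₀ : x i t₀ = x j t₀ :=
        key2 i j u (by linarith [hu.1]) hu.2 hxu t₀ ht₀
      rw [hGdef]
      exact Finset.mem_filter.2 ⟨Finset.mem_univ i, hxt₀⟩
  have hGv : ∀ u ∈ Ioo a τ, ∀ i ∈ G, v i u = v j u := fun u hu i hi =>
    h.v_eq (by linarith [hu.1] : (0:ℝ) ≤ u) ((hGiff u hu i).1 hi)
  have hmG : 0 < ∑ i ∈ G, m i := Finset.sum_pos (fun i _ => h.m_pos i) ⟨j, hjG⟩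
  -- continuity of the conserved quantity on (a, τ)
  have hvc : ∀ u ∈ Ioo a τ, ∀ i : Fin N, ContinuousAt (v i) u := by
    intro u hu i
    have hu0 : (0:ℝ) < u := lt_of_le_of_lt ha0 hu.1
    exact ((h.v_deriv i u ⟨hu0.le, key1 u hu⟩).continuousWithinAt).continuousAt
      (Ici_mem_nhds hu0)
  have hxc : ∀ u : ℝ, 0 < u → ∀ i : Fin N, ContinuousAt (x i) u := by
    intro u hu0 i
    exact (h.x_cont i u hu0.le).continuousAt (Ici_mem_nhds hu0)
  have hQc : ∀ u : ℝ, 0 < u → ContinuousAt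
      (fun w => ∑ i ∈ G, ∑ k ∈ Gᶜ, m i * m k * Phi φ (x k w - x i w)) u := by
    intro u hu0
    apply tendsto_finset_sum
    intro i _
    apply tendsto_finset_sum
    intro k _
    exact tendsto_const_nhds.mul
      (((Phi_cont h.φ_locint).continuousAt).comp ((hxc u hu0 k).sub (hxc u hu0 i)))
  -- zero derivative of R - Q on (a, τ)
  have hderiv : ∀ u ∈ Ioo a τ, HasDerivWithinAt
      (fun w => (∑ i ∈ G, m i * v i w) -
        ∑ i ∈ G, ∑ k ∈ Gᶜ, m i * m k * Phi φ (x k w - x i w)) 0 (Ici 0) u := by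
    intro u hu
    have hu0 : (0:ℝ) ≤ u := by linarith [hu.1]
    have huC : u ∉ C := key1 u hu
    have hfilter : ∀ i, i ∈ G →
        Finset.univ.filter (fun k => x k u ≠ x i u) = Gᶜ := by
      intro i hi
      have hxi : x i u = x j u := (hGiff u hu i).1 hi
      ext k
      simp only [Finset.mem_filter, Finset.mem_univ, true_and, Finset.mem_compl]
      rw [hxi]
      constructor
      · intro hne hkG
        exact hne ((hGiff u hu k).1 hkG)
      · intro hkG hne
        exact hkG ((hGiff u hu k).2 hne)
    have hR : HasDerivWithinAt (fun w => ∑ i ∈ G, m i * v i w)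
        (∑ i ∈ G, m i * (∑ k ∈ Finset.univ.filter (fun k => x k u ≠ x i u),
          m k * φ (x k u - x i u) * (v k u - v i u))) (Ici 0) u :=
      HasDerivWithinAt.fun_sum (fun i _ => (h.v_deriv i u ⟨hu0, huC⟩).const_mul (m i))
    have hQ : HasDerivWithinAt
        (fun w => ∑ i ∈ G, ∑ k ∈ Gᶜ, m i * m k * Phi φ (x k w - x i w))
        (∑ i ∈ G, ∑ k ∈ Gᶜ, m i * m k * (φ (x k u - x i u) * (v k u - v i u)))
        (Ici 0) u := by
      apply HasDerivWithinAt.fun_sum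
      intro i hi
      apply HasDerivWithinAt.fun_sum
      intro k hk
      have hxi : x i u = x j u := (hGiff u hu i).1 hi
      have hxk : x k u ≠ x j u := fun hc => (Finset.mem_compl.1 hk) ((hGiff u hu k).2 hc)
      have hxne : x k u - x i u ≠ 0 := sub_ne_zero.2 (by rw [hxi]; exact hxk)
      have hPhi := Phi_hasDeriv h.φ_locint h.φ_cont hxne
      have hxder : HasDerivWithinAt (fun w => x k w - x i w) (v k u - v i u) (Ici 0) u :=
        (h.x_deriv k u ⟨hu0, huC⟩).sub (h.x_deriv i u ⟨hu0, huC⟩)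
      exact (hPhi.comp_hasDerivWithinAt u hxder).const_mul (m i * m k)
    have hsum_eq : (∑ i ∈ G, m i * (∑ k ∈ Finset.univ.filter (fun k => x k u ≠ x i u),
          m k * φ (x k u - x i u) * (v k u - v i u)))
        = ∑ i ∈ G, ∑ k ∈ Gᶜ, m i * m k * (φ (x k u - x i u) * (v k u - v i u)) := by
      apply Finset.sum_congr rfl
      intro i hi
      rw [hfilter i hi, Finset.mul_sum]
      apply Finset.sum_congr rfl
      intro k _
      ring
    have hcomb := hR.sub hQ
    rw [hsum_eq, sub_self] at hcomb
    exact hcomb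
  -- the quantity is constant on (a, τ)
  have hconst : ∀ u ∈ Ioo a τ,
      ((∑ i ∈ G, m i * v i u) - ∑ i ∈ G, ∑ k ∈ Gᶜ, m i * m k * Phi φ (x k u - x i u))
      = ((∑ i ∈ G, m i * v i t₀) - ∑ i ∈ G, ∑ k ∈ Gᶜ, m i * m k * Phi φ (x k t₀ - x i t₀)) := by
    have hgen : ∀ lo hi : ℝ, lo ∈ Ioo a τ → hi ∈ Ioo a τ → lo ≤ hi →
        ((∑ i ∈ G, m i * v i hi) - ∑ i ∈ G, ∑ k ∈ Gᶜ, m i * m k * Phi φ (x k hi - x i hi))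
        = ((∑ i ∈ G, m i * v i lo) - ∑ i ∈ G, ∑ k ∈ Gᶜ, m i * m k * Phi φ (x k lo - x i lo)) := by
      intro lo hi hlo hhi hlohi
      have hsubset : Icc lo hi ⊆ Ioo a τ := fun w hw => ⟨lt_of_lt_of_le hlo.1 hw.1,
        lt_of_le_of_lt hw.2 hhi.2⟩
      have hcont : ContinuousOn (fun w => (∑ i ∈ G, m i * v i w) -
          ∑ i ∈ G, ∑ k ∈ Gᶜ, m i * m k * Phi φ (x k w - x i w)) (Icc lo hi) := by
        intro w hw
        have hwmem := hsubset hw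
        have hw0 : (0:ℝ) < w := lt_of_le_of_lt ha0 hwmem.1
        apply ContinuousAt.continuousWithinAt
        exact (tendsto_finset_sum _ (fun i _ => tendsto_const_nhds.mul (hvc w hwmem i))).sub
          (hQc w hw0)
      have hder : ∀ w ∈ Ico lo hi, HasDerivWithinAt (fun w => (∑ i ∈ G, m i * v i w) -
          ∑ i ∈ G, ∑ k ∈ Gᶜ, m i * m k * Phi φ (x k w - x i w)) 0 (Ici w) w := by
        intro w hw
        have hwmem : w ∈ Ioo a τ := hsubset ⟨hw.1, hw.2.le⟩
        exact (hderiv w hwmem).mono (Ici_subset_Ici.2 (by linarith [hwmem.1]))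
      exact constant_of_has_deriv_right_zero hcont hder hi ⟨hlohi, le_refl hi⟩
    intro u hu
    rcases le_total u t₀ with hut | hut
    · exact (hgen u t₀ hu ht₀ hut).symm
    · exact hgen t₀ u ht₀ hu hut
  -- pass to the limit
  have hQlim : Tendsto (fun u => ∑ i ∈ G, ∑ k ∈ Gᶜ, m i * m k * Phi φ (x k u - x i u))
      (𝓝[<] τ) (𝓝 (∑ i ∈ G, ∑ k ∈ Gᶜ, m i * m k * Phi φ (x k τ - x i τ))) :=
    ((hQc τ hτ0)).mono_left nhdsWithin_le_nhds
  set cst := ((∑ i ∈ G, m i * v i t₀) -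
    ∑ i ∈ G, ∑ k ∈ Gᶜ, m i * m k * Phi φ (x k t₀ - x i t₀)) with hcstdef
  refine ⟨(cst + ∑ i ∈ G, ∑ k ∈ Gᶜ, m i * m k * Phi φ (x k τ - x i τ)) / (∑ i ∈ G, m i), ?_⟩
  have htend : Tendsto (fun u => (cst +
      ∑ i ∈ G, ∑ k ∈ Gᶜ, m i * m k * Phi φ (x k u - x i u)) / (∑ i ∈ G, m i)) (𝓝[<] τ)
      (𝓝 ((cst + ∑ i ∈ G, ∑ k ∈ Gᶜ, m i * m k * Phi φ (x k τ - x i τ)) / (∑ i ∈ G, m i))) :=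
    (tendsto_const_nhds.add hQlim).div_const _
  apply htend.congr'
  filter_upwards [Ioo_mem_nhdsLT_of_mem (show τ ∈ Ioc a τ from ⟨haτ, le_refl τ⟩)] with u hu
  have hsum : (∑ i ∈ G, m i * v i u) = (∑ i ∈ G, m i) * v j u := by
    rw [Finset.sum_mul]
    apply Finset.sum_congr rfl
    intro i hi
    rw [hGv u hu i hi]
  have hcu := hconst u hu
  rw [hsum] at hcu
  field_simp
  linarith [hcu]

lemma StickyCS.V_jump (h : StickyCS N m φ C x v) (hN : 0 < N)
    (V : ℝ → ℝ)
    (hV : ∀ t, V t = Finset.univ.sup' ⟨⟨0, hN⟩, Finset.mem_univ _⟩ (fun i => v i t)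
        - Finset.univ.inf' ⟨⟨0, hN⟩, Finset.mem_univ _⟩ (fun i => v i t))
    {τ : ℝ} (hτ : τ ∈ C) :
    ∃ L, Tendsto V (𝓝[<] τ) (𝓝 L) ∧ V τ ≤ L := by
  obtain ⟨L, hL⟩ := h.left_tendsto hτ
  have hne : (Finset.univ : Finset (Fin N)).Nonempty := ⟨⟨0, hN⟩, Finset.mem_univ _⟩
  refine ⟨Finset.univ.sup' hne L - Finset.univ.inf' hne L, ?_, ?_⟩
  · have h1 := tendsto_finset_sup' Finset.univ hne (fun i u => v i u) (𝓝[<] τ) L hL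
    have h2 := tendsto_finset_inf' Finset.univ hne (fun i u => v i u) (𝓝[<] τ) L hL
    exact (h1.sub h2).congr (fun u => (hV u).symm)
  · have hLlim : ∀ jj : Fin N, Function.leftLim (v jj) τ = L jj := by
      intro jj
      have hnb : (𝓝[<] τ).NeBot := inferInstance
      exact leftLim_eq_of_tendsto (hL jj)
    have hbound : ∀ i : Fin N,
        v i τ ≤ Finset.univ.sup' hne L ∧ Finset.univ.inf' hne L ≤ v i τ := by
      intro i
      have hform := h.collide τ hτ i
      have hiJ : i ∈ Finset.univ.filter (fun jj => x jj τ = x i τ) := by simp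
      have hSpos : 0 < ∑ jj ∈ Finset.univ.filter (fun jj => x jj τ = x i τ), m jj :=
        Finset.sum_pos (fun jj _ => h.m_pos jj) ⟨i, hiJ⟩
      rw [hform]
      constructor
      · rw [div_le_iff₀ hSpos]
        calc (∑ jj ∈ Finset.univ.filter (fun jj => x jj τ = x i τ),
              m jj * Function.leftLim (v jj) τ)
            = ∑ jj ∈ Finset.univ.filter (fun jj => x jj τ = x i τ), m jj * L jj := by
              apply Finset.sum_congr rfl; intro jj _; rw [hLlim jj]
          _ ≤ ∑ jj ∈ Finset.univ.filter (fun jj => x jj τ = x i τ),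
              m jj * Finset.univ.sup' hne L := by
              apply Finset.sum_le_sum
              intro jj _
              exact mul_le_mul_of_nonneg_left (Finset.le_sup' L (Finset.mem_univ jj))
                (h.m_pos jj).le
          _ = Finset.univ.sup' hne L *
              ∑ jj ∈ Finset.univ.filter (fun jj => x jj τ = x i τ), m jj := by
              rw [← Finset.sum_mul]; ring
      · rw [le_div_iff₀ hSpos]
        calc Finset.univ.inf' hne L *
              ∑ jj ∈ Finset.univ.filter (fun jj => x jj τ = x i τ), m jj
            = ∑ jj ∈ Finset.univ.filter (fun jj => x jj τ = x i τ),
              m jj * Finset.univ.inf' hne L := by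
              rw [← Finset.sum_mul]; ring
          _ ≤ ∑ jj ∈ Finset.univ.filter (fun jj => x jj τ = x i τ), m jj * L jj := by
              apply Finset.sum_le_sum
              intro jj _
              exact mul_le_mul_of_nonneg_left (Finset.inf'_le L (Finset.mem_univ jj))
                (h.m_pos jj).le
          _ = ∑ jj ∈ Finset.univ.filter (fun jj => x jj τ = x i τ),
              m jj * Function.leftLim (v jj) τ := by
              apply Finset.sum_congr rfl; intro jj _; rw [hLlim jj]
    rw [hV τ]
    have hsup : Finset.univ.sup' hne (fun i => v i τ) ≤ Finset.univ.sup' hne L :=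
      Finset.sup'_le hne _ (fun i _ => (hbound i).1)
    have hinf : Finset.univ.inf' hne L ≤ Finset.univ.inf' hne (fun i => v i τ) :=
      Finset.le_inf' hne _ (fun i _ => (hbound i).2)
    linarith

end Sticky

/-- **Fast alignment.** Let `D_N(t) = x_N(t) − x_1(t)` and
`V_N(t) = max_i v_i(t) − min_i v_i(t)`. If `sup_{R>0} Φ(R) > E⁰ := Φ(D_N(0)) + V_N(0)`, then
with `D̄ := inf{R ≥ 0 : Φ(R) ≥ E⁰}` one has `V_N(t) ≤ V_N(0)·exp(−φ(D̄)t)` for all `t ≥ 0`. -/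
theorem sticky_CS_fast_alignment {N : ℕ} (hN : 0 < N) (m : Fin N → ℝ) (φ : ℝ → ℝ)
    (C : Set ℝ) (x v : Fin N → ℝ → ℝ) (h : StickyCS N m φ C x v)
    (D V : ℝ → ℝ)
    (hD : ∀ t, D t = x ⟨N - 1, Nat.sub_lt hN Nat.one_pos⟩ t - x ⟨0, hN⟩ t)
    (hV : ∀ t, V t = Finset.univ.sup' ⟨⟨0, hN⟩, Finset.mem_univ _⟩ (fun i => v i t)
        - Finset.univ.inf' ⟨⟨0, hN⟩, Finset.mem_univ _⟩ (fun i => v i t))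
    (E0 : ℝ) (hE0 : E0 = Phi φ (D 0) + V 0)
    (hthreshold : ∃ R : ℝ, 0 < R ∧ E0 < Phi φ R)
    (Dbar : ℝ) (hDbar : Dbar = sInf {R : ℝ | 0 ≤ R ∧ E0 ≤ Phi φ R}) :
    ∀ t : ℝ, 0 ≤ t → V t ≤ V 0 * Real.exp (-(φ Dbar) * t) := by
  intro t ht
  have hne : (Finset.univ : Finset (Fin N)).Nonempty := ⟨⟨0, hN⟩, Finset.mem_univ _⟩
  set I : Fin N := ⟨0, hN⟩ with hIdef
  set J : Fin N := ⟨N - 1, Nat.sub_lt hN Nat.one_pos⟩ with hJdef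
  have hVnonneg : ∀ s : ℝ, 0 ≤ V s := by
    intro s
    rw [hV s]
    have h1 : Finset.univ.inf' hne (fun i => v i s) ≤ v I s :=
      Finset.inf'_le (fun i => v i s) (Finset.mem_univ I)
    have h2 : v I s ≤ Finset.univ.sup' hne (fun i => v i s) :=
      Finset.le_sup' (fun i => v i s) (Finset.mem_univ I)
    linarith
  have hx_le : ∀ (i : Fin N) (s : ℝ), 0 ≤ s → x I s ≤ x i s ∧ x i s ≤ x J s := by
    intro i s hs
    constructor
    · exact h.x_ord I i (by simp [hIdef, Fin.le_def]) s hs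
    · refine h.x_ord i J ?_ s hs
      rw [Fin.le_def]
      have := i.isLt
      simp only [hJdef]
      omega
  have hDnonneg : ∀ s : ℝ, 0 ≤ s → 0 ≤ D s := by
    intro s hs
    rw [hD s]
    have := hx_le I s hs
    have := hx_le J s hs
    linarith [(hx_le I s hs).2]
  by_cases hzero : ∃ s, 0 ≤ s ∧ s ≤ t ∧ D s = 0
  · obtain ⟨s, hs0, hst, hDs⟩ := hzero
    have hDseq := hD s
    have hall : ∀ i : Fin N, x i s = x I s := by
      intro i
      obtain ⟨hi1, hi2⟩ := hx_le i s hs0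
      refine le_antisymm ?_ hi1
      rw [hDseq] at hDs
      linarith
    have hallt : ∀ i : Fin N, x i t = x I t := fun i => h.sticky i I s t hs0 hst (hall i)
    have hveq : ∀ i : Fin N, v i t = v I t := fun i => h.v_eq ht (hallt i)
    have hVt : V t = 0 := by
      rw [hV t]
      have hsup : Finset.univ.sup' hne (fun i => v i t) = v I t :=
        le_antisymm (Finset.sup'_le hne _ (fun i _ => (hveq i).le))
          (Finset.le_sup' (fun i => v i t) (Finset.mem_univ I))
      have hinf : Finset.univ.inf' hne (fun i => v i t) = v I t :=
        le_antisymm (Finset.inf'_le (fun i => v i t) (Finset.mem_univ I))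
          (Finset.le_inf' hne _ (fun i _ => (hveq i).ge))
      rw [hsup, hinf]; ring
    rw [hVt]
    exact mul_nonneg (hVnonneg 0) (Real.exp_pos _).le
  · push_neg at hzero
    have hDpos : ∀ s, 0 ≤ s → s ≤ t → 0 < D s := fun s h1 h2 =>
      lt_of_le_of_ne (hDnonneg s h1) (Ne.symm (hzero s h1 h2))
    have hDfun : D = fun u => x J u - x I u := funext hD
    -- continuity helpers for V
    have hVrc : ∀ s : ℝ, 0 ≤ s → ContinuousWithinAt V (Ici s) s := by
      intro s hs
      have h1 := tendsto_finset_sup' Finset.univ hne (fun i u => v i u) (𝓝[Ici s] s)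
        (fun i => v i s) (fun i => h.v_rc i s hs)
      have h2 := tendsto_finset_inf' Finset.univ hne (fun i u => v i u) (𝓝[Ici s] s)
        (fun i => v i s) (fun i => h.v_rc i s hs)
      have h3 := (h1.sub h2).congr (fun u => (hV u).symm)
      show Tendsto V (𝓝[Ici s] s) (𝓝 (V s))
      rw [hV s]
      exact h3
    have hVca : ∀ s : ℝ, 0 < s → s ∉ C → ContinuousAt V s := by
      intro s hs hsC
      have hvc : ∀ i : Fin N, ContinuousAt (v i) s := fun i =>
        ((h.v_deriv i s ⟨hs.le, hsC⟩).continuousWithinAt).continuousAt (Ici_mem_nhds hs)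
      have h1 := tendsto_finset_sup' Finset.univ hne (fun i u => v i u) (𝓝 s)
        (fun i => v i s) (fun i => hvc i)
      have h2 := tendsto_finset_inf' Finset.univ hne (fun i u => v i u) (𝓝 s)
        (fun i => v i s) (fun i => hvc i)
      have h3 := (h1.sub h2).congr (fun u => (hV u).symm)
      show Tendsto V (𝓝 s) (𝓝 (V s))
      rw [hV s]
      exact h3
    -- continuity helpers for Phi ∘ D
    have hPhiD_rc : ∀ s : ℝ, 0 ≤ s → ContinuousWithinAt (fun u => Phi φ (D u)) (Ici s) s := by
      intro s hs
      have hDc : ContinuousWithinAt D (Ici s) s := by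
        rw [hDfun]
        exact ((h.x_cont J s hs).mono (Ici_subset_Ici.2 hs)).sub
          ((h.x_cont I s hs).mono (Ici_subset_Ici.2 hs))
      exact (Phi_cont h.φ_locint).continuousAt.comp_continuousWithinAt hDc
    have hPhiD_ca : ∀ s : ℝ, 0 < s → ContinuousAt (fun u => Phi φ (D u)) s := by
      intro s hs
      have hDc : ContinuousAt D s := by
        rw [hDfun]
        exact ((h.x_cont J s hs.le).continuousAt (Ici_mem_nhds hs)).sub
          ((h.x_cont I s hs.le).continuousAt (Ici_mem_nhds hs))
      exact (Phi_cont h.φ_locint).continuousAt.comp hDc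
    -- Phase 1: energy bound
    have phase1 : ∀ s, 0 ≤ s → s ≤ t → Phi φ (D s) + V s ≤ E0 := by
      have hch := chain_bound h.C_fin h.C_pos (fun s => Phi φ (D s) + V s) E0 0 t
        (by rw [hE0])
        (fun s hs0 _ => (hPhiD_rc s hs0).add (hVrc s hs0))
        (fun s hs0 _ hsC => (hPhiD_ca s hs0).add (hVca s hs0 hsC))
        (fun s hs0 hst hsC r hr => by
          rw [zero_mul] at hr
          have hDs := hDpos s hs0 hst.le
          have hgder : HasDerivWithinAt (fun u => Phi φ (D u))
              (φ (D s) * (v J s - v I s)) (Ici s) s := by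
            have hxder : HasDerivWithinAt D (v J s - v I s) (Ici 0) s := by
              rw [hDfun]
              exact (h.x_deriv J s ⟨hs0, hsC⟩).sub (h.x_deriv I s ⟨hs0, hsC⟩)
            exact ((Phi_hasDeriv h.φ_locint h.φ_cont hDs.ne').comp_hasDerivWithinAt s
              hxder).mono (Ici_subset_Ici.2 hs0)
          have hvJI : v J s - v I s ≤ V s := by
            rw [hV s]
            have h1 : v J s ≤ Finset.univ.sup' hne (fun i => v i s) :=
              Finset.le_sup' (fun i => v i s) (Finset.mem_univ J)
            have h2 : Finset.univ.inf' hne (fun i => v i s) ≤ v I s :=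
              Finset.inf'_le (fun i => v i s) (Finset.mem_univ I)
            linarith
          have hgd_le : φ (D s) * (v J s - v I s) ≤ φ (D s) * V s :=
            mul_le_mul_of_nonneg_left hvJI (h.φ_nonneg _)
          have hslope : Tendsto (slope (fun u => Phi φ (D u)) s) (𝓝[>] s)
              (𝓝 (φ (D s) * (v J s - v I s))) := by
            have := hasDerivWithinAt_iff_tendsto_slope.1 hgder
            rwa [Ici_sdiff_left] at this
          have hev1 := hslope.eventually_lt_const
            (show φ (D s) * (v J s - v I s) < φ (D s) * V s + r/2 by linarith)
          have hev2 := h.dini_V hN D V hD hV hs0 hsC (-(φ (D s) * V s) + r/2)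
            (by linarith)
          filter_upwards [hev1, hev2, self_mem_nhdsWithin] with z hz1 hz2 hz3
          have hzt : 0 < z - s := sub_pos.2 hz3
          rw [slope_def_field, div_lt_iff₀ hzt] at hz1
          have hring : (φ (D s) * V s + r/2) * (z - s) +
              (-(φ (D s) * V s) + r/2) * (z - s) = r * (z - s) := by ring
          have hz1' : Phi φ (D z) - Phi φ (D s) < (φ (D s) * V s + r/2) * (z - s) := by
            linarith
          linarith)
        (fun τ hτC _ => by
          obtain ⟨Lf, hLf, hVle⟩ := h.V_jump hN V hV hτC
          have hτ0 : 0 < τ := h.C_pos hτC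
          exact ⟨Phi φ (D τ) + Lf,
            ((hPhiD_ca τ hτ0).mono_left nhdsWithin_le_nhds).add hLf,
            show Phi φ (D τ) + V τ ≤ Phi φ (D τ) + Lf by linarith⟩)
      intro s h1 h2
      have hres := hch s h1 h2
      simpa using hres
    -- the rate bound
    have hSne : {R : ℝ | 0 ≤ R ∧ E0 ≤ Phi φ R}.Nonempty := by
      obtain ⟨R, hR0, hRE⟩ := hthreshold
      exact ⟨R, hR0.le, hRE.le⟩
    have hc_ge : ∀ s, 0 ≤ s → s ≤ t → 0 < V s → φ Dbar ≤ φ (D s) := by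
      intro s h1 h2 hVs
      have hp1 := phase1 s h1 h2
      have hPhiDs : Phi φ (D s) < E0 := by linarith
      have hDle : D s ≤ Dbar := by
        rw [hDbar]
        apply le_csInf hSne
        intro b hb
        by_contra hcon
        push_neg at hcon
        have := Phi_mono h.φ_locint h.φ_nonneg hcon.le
        linarith [hb.2]
      have hDspos := hDpos s h1 h2
      exact h.φ_anti (mem_Ioi.2 hDspos) (mem_Ioi.2 (lt_of_lt_of_le hDspos hDle)) hDle
    -- Phase 3: Gronwall for V
    have phase3 := chain_bound h.C_fin h.C_pos V (V 0) (-(φ Dbar)) t le_rfl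
      (fun s hs0 _ => hVrc s hs0)
      (fun s hs0 _ hsC => hVca s hs0 hsC)
      (fun s hs0 hst hsC r hr => by
        apply h.dini_V hN D V hD hV hs0 hsC r
        rcases eq_or_lt_of_le (hVnonneg s) with hV0 | hVpos
        · rw [← hV0] at hr ⊢
          simpa using hr
        · have hφ := hc_ge s hs0 hst.le hVpos
          have hmul : φ Dbar * V s ≤ φ (D s) * V s :=
            mul_le_mul_of_nonneg_right hφ hVpos.le
          have : -(φ (D s) * V s) ≤ -(φ Dbar) * V s := by linarith
          linarith)
      (fun τ hτC _ => h.V_jump hN V hV hτC)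
    exact phase3 t ht le_rfl
end
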